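/- arXiv:1502.06695 — 9 statements merged into one kernel-verified Lean document; each statement's English description precedes it below -/
import Mathlib

section
/- Let L ≥ 2, let f_0, …, f_{L−1} ∈ ℂ[[w]] with f_0(0) ≠ 0, and let 𝐦 = (m_0, …, m_{L−1}) be a tuple of positive integers. Suppose that for each i (0 ≤ i ≤ L−1) we are given a type I system (𝔮^{𝐦+𝐞_i}_j)_{0≤j≤L−1} for the multi-index 𝐦+𝐞_i and a type II system (𝔭^{𝐦−𝐞_i}_j)_{0≤j≤L−1} for the multi-index 𝐦−𝐞_i. Then the L×L matrix product [𝔮^{𝐦+𝐞_i}_j]_{0≤i,j≤L−1} · [𝔭^{𝐦−𝐞_j}_i]_{0≤i,j≤L−1} equals w^{|𝐦|}·D for some diagonal constant matrix D ∈ ℂ^{L×L}. Moreover, if each 𝔮^{𝐦+𝐞_i}_i is monic of degree m_i and each 𝔭^{𝐦−𝐞_i}_i is monic of degree |𝐦|−m_i, then D is the identity matrix. -/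
noncomputable section

/-- `g = O(w^N)`: the coefficients of `w^0, …, w^{N-1}` in `g` vanish. -/
def bigOh (g : PowerSeries ℂ) (N : ℕ) : Prop := ∀ k < N, PowerSeries.coeff k g = 0

/-- A type I (Hermite–Padé) system for `f` with multi-index `k`:
polynomials `q i` of degree ≤ `k i - 1` with `∑ f i * q i = O(w^{|k|-1})`. -/
def IsTypeI {L : ℕ} (f : Fin L → PowerSeries ℂ) (k : Fin L → ℕ)
    (q : Fin L → Polynomial ℂ) : Prop :=
  (∀ j, (q j).degree < (k j : ℕ)) ∧
  bigOh (∑ j, f j * ((q j : Polynomial ℂ) : PowerSeries ℂ)) ((∑ j, k j) - 1)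

/-- A type II (simultaneous Padé) system for `f` with multi-index `k`:
polynomials `p i` of degree ≤ `|k| - k i` with `f i * p j - f j * p i = O(w^{|k|+1})`. -/
def IsTypeII {L : ℕ} (f : Fin L → PowerSeries ℂ) (k : Fin L → ℕ)
    (p : Fin L → Polynomial ℂ) : Prop :=
  (∀ j, (p j).degree ≤ (((∑ t, k t) - k j : ℕ) : WithBot ℕ)) ∧
  ∀ i j, bigOh (f i * ((p j : Polynomial ℂ) : PowerSeries ℂ)
                 - f j * ((p i : Polynomial ℂ) : PowerSeries ℂ)) ((∑ t, k t) + 1)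

lemma degree_le_of_lt_succ {f : Polynomial ℂ} {c : ℕ}
    (h : f.degree < ((c + 1 : ℕ) : WithBot ℕ)) : f.degree ≤ (c : WithBot ℕ) := by
  by_cases hf : f = 0
  · simp [hf]
  · rw [Polynomial.degree_eq_natDegree hf] at h ⊢
    have hn : f.natDegree < c + 1 := by exact_mod_cast h
    exact_mod_cast Nat.lt_succ_iff.mp hn

lemma natcast_le_withbot {a b : ℕ} (h : a ≤ b) : (a : WithBot ℕ) ≤ (b : WithBot ℕ) := by
  exact_mod_cast h

lemma natcast_lt_withbot {a b : ℕ} (h : a < b) : (a : WithBot ℕ) < (b : WithBot ℕ) := by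
  exact_mod_cast h

/-- Mahler's duality for Hermite's two approximation problems. -/
theorem mahler_duality (L : ℕ) (hL : 2 ≤ L)
    (f : Fin L → PowerSeries ℂ)
    (hf0 : PowerSeries.constantCoeff (f ⟨0, by omega⟩) ≠ 0)
    (m : Fin L → ℕ) (hm : ∀ i, 0 < m i)
    (q p : Fin L → Fin L → Polynomial ℂ)
    (hq : ∀ i, IsTypeI f (fun j => m j + if j = i then 1 else 0) (q i))
    (hp : ∀ i, IsTypeII f (fun j => m j - if j = i then 1 else 0) (p i)) :
    (∃ D : Fin L → ℂ,
        (Matrix.of fun i j => q i j) * (Matrix.of fun i j => p j i) =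
          Matrix.diagonal fun i => Polynomial.C (D i) * Polynomial.X ^ (∑ t, m t)) ∧
      ((∀ i, (q i i).Monic ∧ (q i i).natDegree = m i) →
        (∀ i, (p i i).Monic ∧ (p i i).natDegree = (∑ t, m t) - m i) →
        (Matrix.of fun i j => q i j) * (Matrix.of fun i j => p j i) =
          Matrix.diagonal fun _ => Polynomial.X ^ (∑ t, m t)) := by
  classical
  set M := ∑ t, m t with hMdef
  set z : Fin L := ⟨0, by omega⟩ with hz
  haveI : Nontrivial (Fin L) := Fin.nontrivial_iff_two_le.mpr hL
  -- each m t is strictly less than M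
  have hML : ∀ t, m t + 1 ≤ M := by
    intro t
    obtain ⟨s, hs⟩ := exists_ne t
    have h1 : m t + ∑ x ∈ Finset.univ.erase t, m x = M :=
      Finset.add_sum_erase _ m (Finset.mem_univ t)
    have h2 : m s ≤ ∑ x ∈ Finset.univ.erase t, m x :=
      Finset.single_le_sum (fun i _ => Nat.zero_le _)
        (Finset.mem_erase.mpr ⟨hs, Finset.mem_univ s⟩)
    have := hm s
    omega
  have hM2 : 2 ≤ M := by have := hML z; have := hm z; omega
  -- the sums of the modified multi-indices
  have hsum_add : ∀ i : Fin L, (∑ j, (m j + if j = i then 1 else 0)) = M + 1 := by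
    intro i
    rw [Finset.sum_add_distrib, Finset.sum_ite_eq']
    simp [hMdef]
  have hsum_sub : ∀ i : Fin L, (∑ j, (m j - if j = i then 1 else 0)) = M - 1 := by
    intro i
    have h1 : ∀ j : Fin L,
        (m j - if j = i then 1 else 0) + (if j = i then 1 else 0) = m j := by
      intro j
      have := hm j
      split <;> omega
    have h2 : (∑ j, ((m j - if j = i then 1 else 0) + if j = i then 1 else 0)) = M :=
      Finset.sum_congr rfl fun j _ => h1 j
    rw [Finset.sum_add_distrib, Finset.sum_ite_eq'] at h2
    simp only [Finset.mem_univ, if_true] at h2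
    omega
  -- degree bounds
  have hdq : ∀ i t, (q i t).degree ≤
      ((m t + (if t = i then 1 else 0) - 1 : ℕ) : WithBot ℕ) := by
    intro i t
    have h : (q i t).degree < ((m t + if t = i then 1 else 0 : ℕ) : WithBot ℕ) := (hq i).1 t
    have heq : m t + (if t = i then 1 else 0)
        = (m t + (if t = i then 1 else 0) - 1) + 1 := by
      have := hm t; omega
    rw [heq] at h
    exact degree_le_of_lt_succ h
  have hdp : ∀ j t, (p j t).degree ≤
      ((M - 1 - (m t - if t = j then 1 else 0) : ℕ) : WithBot ℕ) := by
    intro j t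
    have h := (hp j).1 t
    rwa [hsum_sub j] at h
  have hdqp : ∀ i j t, ((q i t) * (p j t)).degree ≤
      ((M - 2 + (if t = i then 1 else 0) + (if t = j then 1 else 0) : ℕ) : WithBot ℕ) := by
    intro i j t
    refine (Polynomial.degree_mul_le _ _).trans ?_
    refine (add_le_add (hdq i t) (hdp j t)).trans ?_
    rw [← Nat.cast_add]
    refine natcast_le_withbot ?_
    have h1 := hm t
    have h2 := hML t
    split_ifs <;> omega
  -- degree bounds on the entries
  have hEdeg : ∀ i j, (∑ t, q i t * p j t).degree ≤ (M : WithBot ℕ) := by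
    intro i j
    refine (Polynomial.degree_sum_le _ _).trans (Finset.sup_le fun t _ => ?_)
    refine (hdqp i j t).trans (natcast_le_withbot ?_)
    split_ifs <;> omega
  have hEdeg' : ∀ i j, i ≠ j → (∑ t, q i t * p j t).degree < (M : WithBot ℕ) := by
    intro i j hij
    have h1 : (∑ t, q i t * p j t).degree ≤ ((M - 1 : ℕ) : WithBot ℕ) := by
      refine (Polynomial.degree_sum_le _ _).trans (Finset.sup_le fun t _ => ?_)
      refine (hdqp i j t).trans (natcast_le_withbot ?_)
      by_cases h : t = i
      · rw [if_pos h, if_neg (by rw [h]; exact hij)]; omega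
      · rw [if_neg h]; split_ifs <;> omega
    exact lt_of_le_of_lt h1 (natcast_lt_withbot (by omega))
  -- divisibility of the type I and type II defects
  have hqO : ∀ i, (PowerSeries.X : PowerSeries ℂ) ^ M ∣
      ∑ t, f t * ((q i t : Polynomial ℂ) : PowerSeries ℂ) := by
    intro i
    rw [PowerSeries.X_pow_dvd_iff]
    intro n hn
    refine (hq i).2 n ?_
    rw [hsum_add i]
    omega
  have hpO : ∀ j t, (PowerSeries.X : PowerSeries ℂ) ^ M ∣
      (f z * ((p j t : Polynomial ℂ) : PowerSeries ℂ)
        - f t * ((p j z : Polynomial ℂ) : PowerSeries ℂ)) := by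
    intro j t
    rw [PowerSeries.X_pow_dvd_iff]
    intro n hn
    refine (hp j).2 z t n ?_
    rw [hsum_sub j]
    omega
  -- f z is a unit
  have hf0u : IsUnit (f z) :=
    PowerSeries.isUnit_iff_constantCoeff.mpr (isUnit_iff_ne_zero.mpr hf0)
  -- the first M coefficients of each entry vanish
  have hA : ∀ i j, ∀ n < M, (∑ t, q i t * p j t).coeff n = 0 := by
    intro i j
    have hcoe : (((∑ t, q i t * p j t : Polynomial ℂ)) : PowerSeries ℂ)
        = ∑ t, ((q i t : Polynomial ℂ) : PowerSeries ℂ)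
            * ((p j t : Polynomial ℂ) : PowerSeries ℂ) := by
      rw [show (((∑ t, q i t * p j t : Polynomial ℂ)) : PowerSeries ℂ)
          = Polynomial.coeToPowerSeries.ringHom (∑ t, q i t * p j t) from rfl, map_sum]
      simp [Polynomial.coe_mul]
    have hmain : f z * (((∑ t, q i t * p j t : Polynomial ℂ)) : PowerSeries ℂ)
        = ((p j z : Polynomial ℂ) : PowerSeries ℂ)
            * (∑ t, f t * ((q i t : Polynomial ℂ) : PowerSeries ℂ))
          + ∑ t, ((q i t : Polynomial ℂ) : PowerSeries ℂ)
              * (f z * ((p j t : Polynomial ℂ) : PowerSeries ℂ)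
                - f t * ((p j z : Polynomial ℂ) : PowerSeries ℂ)) := by
      rw [hcoe, Finset.mul_sum, Finset.mul_sum, ← Finset.sum_add_distrib]
      exact Finset.sum_congr rfl fun t _ => by ring
    have hdvd : (PowerSeries.X : PowerSeries ℂ) ^ M ∣
        f z * (((∑ t, q i t * p j t : Polynomial ℂ)) : PowerSeries ℂ) := by
      rw [hmain]
      exact dvd_add (Dvd.dvd.mul_left (hqO i) _)
        (Finset.dvd_sum fun t _ => Dvd.dvd.mul_left (hpO j t) _)
    have hdvd2 : (PowerSeries.X : PowerSeries ℂ) ^ M ∣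
        (((∑ t, q i t * p j t : Polynomial ℂ)) : PowerSeries ℂ) :=
      (IsUnit.dvd_mul_left hf0u).mp hdvd
    intro n hn
    have := PowerSeries.X_pow_dvd_iff.mp hdvd2 n hn
    rwa [Polynomial.coeff_coe] at this
  -- entry characterization
  have hchar : ∀ i j, (∑ t, q i t * p j t)
      = Polynomial.C ((∑ t, q i t * p j t).coeff M) * Polynomial.X ^ M := by
    intro i j
    ext n
    rw [Polynomial.coeff_C_mul, Polynomial.coeff_X_pow]
    rcases lt_trichotomy n M with h | h | h
    · rw [hA i j n h, if_neg (by omega), mul_zero]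
    · subst h; simp
    · rw [Polynomial.coeff_eq_zero_of_degree_lt
        (lt_of_le_of_lt (hEdeg i j) (natcast_lt_withbot h)),
        if_neg (by omega), mul_zero]
  -- the matrix identity with D i = leading coefficient of entry (i,i)
  have hmat : (Matrix.of fun i j => q i j) * (Matrix.of fun i j => p j i) =
      Matrix.diagonal fun i =>
        Polynomial.C ((∑ t, q i t * p i t).coeff M) * Polynomial.X ^ M := by
    funext i j
    rw [Matrix.mul_apply]
    simp only [Matrix.of_apply]
    by_cases hij : i = j
    · subst hij
      rw [Matrix.diagonal_apply_eq]
      exact hchar i i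
    · rw [Matrix.diagonal_apply_ne _ hij]
      have h0 : (∑ t, q i t * p j t).coeff M = 0 :=
        Polynomial.coeff_eq_zero_of_degree_lt (hEdeg' i j hij)
      rw [hchar i j, h0, map_zero, zero_mul]
  refine ⟨⟨fun i => (∑ t, q i t * p i t).coeff M, hmat⟩, ?_⟩
  intro hqm hpm
  rw [hmat]
  have hD : ∀ i, (∑ t, q i t * p i t).coeff M = 1 := by
    intro i
    rw [Polynomial.finset_sum_coeff, Finset.sum_eq_single i]
    · have hmono : (q i i * p i i).Monic := (hqm i).1.mul (hpm i).1
      have hnd : (q i i * p i i).natDegree = M := by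
        rw [Polynomial.natDegree_mul (hqm i).1.ne_zero (hpm i).1.ne_zero,
          (hqm i).2, (hpm i).2]
        have := hML i
        omega
      rw [← hnd]
      exact hmono.coeff_natDegree
    · intro t _ ht
      apply Polynomial.coeff_eq_zero_of_degree_lt
      refine lt_of_le_of_lt (hdqp i i t) (natcast_lt_withbot ?_)
      simp only [if_neg ht]
      omega
    · intro h
      exact absurd (Finset.mem_univ i) h
  refine congrArg Matrix.diagonal (funext fun i => ?_)
  rw [hD i, map_one, one_mul]

end
end

section
/- Let Q_j^{(i)} (0 ≤ i, j ≤ L−1) be a solution of the Hermite–Padé approximation problem and P_i^{(j)} (0 ≤ i, j ≤ L−1) a solution of the simultaneous Padé approximation problem for the same f_0, …, f_{L−1}. Then the L×L matrix product M_Q(w)·M_P(w) equals w^{nL}·D for some diagonal constant matrix D ∈ ℂ^{L×L}. Moreover, if each Q_i^{(i)} is monic of degree n and each P_i^{(i)} is monic of degree n(L−1), then D is the identity matrix. -/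
noncomputable section

/-- The entries of the row vector Q̃^{(i)} = (Q_0^{(i)}, …, Q_i^{(i)}, wQ_{i+1}^{(i)}, …, wQ_{L-1}^{(i)}). -/
def Qtil {L : ℕ} (Q : Fin L → Fin L → Polynomial ℂ) (i j : Fin L) : Polynomial ℂ :=
  if (j : ℕ) ≤ (i : ℕ) then Q i j else Polynomial.X * Q i j

/-- A solution of the Hermite–Padé approximation problem. -/
def IsHPSol {L : ℕ} (n : ℕ) (f : Fin L → PowerSeries ℂ)
    (Q : Fin L → Fin L → Polynomial ℂ) : Prop :=
  (∀ i j, (Q i j).degree ≤ ((n - 1 + if i = j then 1 else 0 : ℕ) : WithBot ℕ)) ∧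
  ∀ i, bigOh (∑ j, f j * ((Qtil Q i j : Polynomial ℂ) : PowerSeries ℂ)) (n * L)

/-- The entries of the column vector P̃^{(j)} = ᵀ(wP_0^{(j)}, …, wP_{j-1}^{(j)}, P_j^{(j)}, …, P_{L-1}^{(j)}). -/
def Ptil {L : ℕ} (P : Fin L → Fin L → Polynomial ℂ) (j i : Fin L) : Polynomial ℂ :=
  if (i : ℕ) < (j : ℕ) then Polynomial.X * P j i else P j i

/-- A solution of the simultaneous Padé approximation problem.
Here `P j i` denotes the polynomial `P_i^{(j)}`. -/
def IsSPSol {L : ℕ} [NeZero L] (n : ℕ) (f : Fin L → PowerSeries ℂ)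
    (P : Fin L → Fin L → Polynomial ℂ) : Prop :=
  (∀ j i, (P j i).degree ≤ ((n * (L - 1) - 1 + if i = j then 1 else 0 : ℕ) : WithBot ℕ)) ∧
  (∀ i : Fin L, 1 ≤ (i : ℕ) →
    bigOh (f 0 * ((P 0 i : Polynomial ℂ) : PowerSeries ℂ)
      - f i * ((P 0 0 : Polynomial ℂ) : PowerSeries ℂ)) (n * L)) ∧
  (∀ j i : Fin L, 1 ≤ (j : ℕ) → 1 ≤ (i : ℕ) → (i : ℕ) < (j : ℕ) →
    bigOh (f 0 * ((P j i : Polynomial ℂ) : PowerSeries ℂ)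
      - f i * ((P j 0 : Polynomial ℂ) : PowerSeries ℂ)) (n * L)) ∧
  (∀ j i : Fin L, 1 ≤ (j : ℕ) → (j : ℕ) ≤ (i : ℕ) →
    bigOh (f 0 * ((P j i : Polynomial ℂ) : PowerSeries ℂ)
      - f i * ((Polynomial.X * P j 0 : Polynomial ℂ) : PowerSeries ℂ)) (n * L))

namespace DualityAux

lemma bigOh_zero (N : ℕ) : bigOh 0 N := fun k _ => by simp

lemma bigOh_mul_left (h g : PowerSeries ℂ) {N : ℕ} (hg : bigOh g N) : bigOh (h * g) N := by
  intro k hk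
  rw [PowerSeries.coeff_mul]
  refine Finset.sum_eq_zero ?_
  rintro ⟨a, b⟩ hab
  rw [Finset.HasAntidiagonal.mem_antidiagonal] at hab
  have hb : b < N := lt_of_le_of_lt (by omega) hk
  rw [hg b hb, mul_zero]

lemma bigOh_add {g h : PowerSeries ℂ} {N : ℕ} (hg : bigOh g N) (hh : bigOh h N) :
    bigOh (g + h) N := by
  intro k hk
  rw [map_add, hg k hk, hh k hk, add_zero]

lemma bigOh_sum {ι : Type*} (s : Finset ι) (F : ι → PowerSeries ℂ) {N : ℕ}
    (h : ∀ j ∈ s, bigOh (F j) N) : bigOh (∑ j ∈ s, F j) N := by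
  intro k hk
  rw [map_sum]
  exact Finset.sum_eq_zero fun j hj => h j hj k hk

lemma bigOh_X_mul {g : PowerSeries ℂ} {N : ℕ} (hg : bigOh g N) :
    bigOh (PowerSeries.X * g) (N + 1) := by
  intro k hk
  cases k with
  | zero => exact PowerSeries.coeff_zero_X_mul g
  | succ m => rw [PowerSeries.coeff_succ_X_mul]; exact hg m (by omega)

lemma bigOh_of_unit_mul {f g : PowerSeries ℂ} {N : ℕ}
    (hf : PowerSeries.constantCoeff f ≠ 0) (h : bigOh (f * g) N) : bigOh g N := by
  have hu : IsUnit f := PowerSeries.isUnit_iff_constantCoeff.mpr (isUnit_iff_ne_zero.mpr hf)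
  obtain ⟨u, rfl⟩ := hu
  have hg : g = ↑u⁻¹ * (↑u * g) := by rw [← mul_assoc, Units.inv_mul, one_mul]
  rw [hg]
  exact bigOh_mul_left _ _ h

lemma coeff_mul_of_degree_le {A B : Polynomial ℂ} {a b : ℕ}
    (ha : A.degree ≤ (a : WithBot ℕ)) (hb : B.degree ≤ (b : WithBot ℕ)) :
    (A * B).coeff (a + b) = A.coeff a * B.coeff b := by
  rw [Polynomial.coeff_mul]
  rw [Finset.sum_eq_single_of_mem (a, b) (Finset.HasAntidiagonal.mem_antidiagonal.mpr rfl)]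
  rintro ⟨x, y⟩ hxy hne
  rw [Finset.HasAntidiagonal.mem_antidiagonal] at hxy
  rcases lt_trichotomy x a with h1 | h1 | h1
  · have h2 : b < y := by omega
    have : B.coeff y = 0 := by
      refine Polynomial.coeff_eq_zero_of_degree_lt (lt_of_le_of_lt hb ?_)
      rw [Nat.cast_withBot, Nat.cast_withBot]
      exact_mod_cast h2
    rw [this, mul_zero]
  · exact absurd (by simp [Prod.ext_iff]; omega) hne
  · have : A.coeff x = 0 := by
      refine Polynomial.coeff_eq_zero_of_degree_lt (lt_of_le_of_lt ha ?_)
      rw [Nat.cast_withBot, Nat.cast_withBot]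
      exact_mod_cast h1
    rw [this, zero_mul]

end DualityAux

open DualityAux in
/-- Mahler-type duality for the modified Hermite–Padé and simultaneous Padé problems. -/
theorem duality (L n : ℕ) (hL : 2 ≤ L) [NeZero L] (hn : 0 < n)
    (f : Fin L → PowerSeries ℂ) (hf0 : PowerSeries.constantCoeff (f 0) ≠ 0)
    (Q P : Fin L → Fin L → Polynomial ℂ)
    (hQ : IsHPSol n f Q) (hP : IsSPSol n f P) :
    (∃ D : Fin L → ℂ,
        (Matrix.of fun i j => Qtil Q i j) * (Matrix.of fun i j => Ptil P j i) =
          Matrix.diagonal fun i => Polynomial.C (D i) * Polynomial.X ^ (n * L)) ∧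
      ((∀ i, (Q i i).Monic ∧ (Q i i).natDegree = n) →
        (∀ i, (P i i).Monic ∧ (P i i).natDegree = n * (L - 1)) →
        (Matrix.of fun i j => Qtil Q i j) * (Matrix.of fun i j => Ptil P j i) =
          Matrix.diagonal fun _ => Polynomial.X ^ (n * L)) := by
  classical
  obtain ⟨hQd, hQo⟩ := hQ
  obtain ⟨hPd, hP1, hP2, hP3⟩ := hP
  set N := n * L with hNdef
  set m := n * (L - 1) with hmdef
  have hm1 : 1 ≤ m := by
    rw [hmdef]
    have : 1 ≤ L - 1 := by omega
    calc 1 = 1 * 1 := by ring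
    _ ≤ n * (L - 1) := Nat.mul_le_mul hn this
  have hNn : n + m = N := by
    have hL1 : L - 1 + 1 = L := by omega
    calc n + n * (L - 1) = n * (L - 1 + 1) := by ring
      _ = n * L := by rw [hL1]
  -- rewriting lemmas for Qtil / Ptil
  have qle : ∀ i j : Fin L, (j : ℕ) ≤ (i : ℕ) → Qtil Q i j = Q i j := by
    intro i j h; unfold Qtil; rw [if_pos h]
  have qgt : ∀ i j : Fin L, (i : ℕ) < (j : ℕ) → Qtil Q i j = Polynomial.X * Q i j := by
    intro i j h; unfold Qtil; rw [if_neg (by omega)]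
  have plt : ∀ k j : Fin L, (j : ℕ) < (k : ℕ) → Ptil P k j = Polynomial.X * P k j := by
    intro k j h; unfold Ptil; rw [if_pos h]
  have pge : ∀ k j : Fin L, (k : ℕ) ≤ (j : ℕ) → Ptil P k j = P k j := by
    intro k j h; unfold Ptil; rw [if_neg (by omega)]
  have pz : ∀ k : Fin L, 1 ≤ (k : ℕ) → Ptil P k 0 = Polynomial.X * P k 0 := by
    intro k hk; refine plt k 0 ?_; rw [Fin.val_zero]; omega
  -- degree bounds
  have hQt1 : ∀ i j : Fin L, (Qtil Q i j).degree ≤ ((n : ℕ) : WithBot ℕ) := by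
    intro i j
    by_cases h : (j : ℕ) ≤ (i : ℕ)
    · rw [qle i j h]
      refine (hQd i j).trans ?_
      rw [Nat.cast_withBot, Nat.cast_withBot]
      exact_mod_cast (by split <;> omega : (n - 1 + if i = j then 1 else 0) ≤ n)
    · rw [qgt i j (by omega)]
      have hij : i ≠ j := by intro he; rw [he] at h; omega
      have hd := hQd i j
      rw [if_neg hij] at hd
      refine (Polynomial.degree_mul_le _ _).trans ?_
      refine (add_le_add Polynomial.degree_X_le hd).trans ?_
      rw [Nat.cast_withBot, Nat.cast_withBot]
      rw [show (1 : WithBot ℕ) = WithBot.some 1 from rfl, ← WithBot.coe_add]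
      exact_mod_cast (by omega : 1 + (n - 1 + 0) ≤ n)
  have hQt0 : ∀ i j : Fin L, (j : ℕ) < (i : ℕ) →
      (Qtil Q i j).degree ≤ ((n - 1 : ℕ) : WithBot ℕ) := by
    intro i j h
    rw [qle i j (by omega)]
    have hij : i ≠ j := by intro he; rw [he] at h; omega
    have hd := hQd i j
    rw [if_neg hij] at hd
    refine hd.trans ?_
    rw [Nat.cast_withBot, Nat.cast_withBot]
    exact_mod_cast (by omega : n - 1 + 0 ≤ n - 1)
  have hPt1 : ∀ k j : Fin L, (Ptil P k j).degree ≤ ((m : ℕ) : WithBot ℕ) := by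
    intro k j
    by_cases h : (j : ℕ) < (k : ℕ)
    · rw [plt k j h]
      have hjk : j ≠ k := by intro he; rw [he] at h; omega
      have hd := hPd k j
      rw [if_neg hjk] at hd
      refine (Polynomial.degree_mul_le _ _).trans ?_
      refine (add_le_add Polynomial.degree_X_le hd).trans ?_
      rw [Nat.cast_withBot, Nat.cast_withBot]
      rw [show (1 : WithBot ℕ) = WithBot.some 1 from rfl, ← WithBot.coe_add]
      exact_mod_cast (by omega : 1 + (m - 1 + 0) ≤ m)
    · rw [pge k j (by omega)]
      refine (hPd k j).trans ?_
      rw [Nat.cast_withBot, Nat.cast_withBot]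
      exact_mod_cast (by split <;> omega : (m - 1 + if j = k then 1 else 0) ≤ m)
  have hPt0 : ∀ k j : Fin L, (k : ℕ) < (j : ℕ) →
      (Ptil P k j).degree ≤ ((m - 1 : ℕ) : WithBot ℕ) := by
    intro k j h
    rw [pge k j (by omega)]
    have hjk : j ≠ k := by intro he; rw [he] at h; omega
    have hd := hPd k j
    rw [if_neg hjk] at hd
    refine hd.trans ?_
    rw [Nat.cast_withBot, Nat.cast_withBot]
    exact_mod_cast (by omega : m - 1 + 0 ≤ m - 1)
  -- the G estimates
  have hG : ∀ k j : Fin L, bigOh (f 0 * ((Ptil P k j : Polynomial ℂ) : PowerSeries ℂ)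
      - f j * ((Ptil P k 0 : Polynomial ℂ) : PowerSeries ℂ)) N := by
    intro k j
    rcases Nat.eq_zero_or_pos (k : ℕ) with hk | hk
    · have hk0 : k = 0 := Fin.val_injective (by simpa using hk)
      subst hk0
      rw [pge 0 j (by simp), pge 0 0 (by simp)]
      rcases Nat.eq_zero_or_pos (j : ℕ) with hj | hj
      · have hj0 : j = 0 := Fin.val_injective (by simpa using hj)
        subst hj0
        rw [sub_self]
        exact bigOh_zero N
      · exact hP1 j hj
    · rw [pz k hk]
      by_cases hjk : (j : ℕ) < (k : ℕ)
      · rw [plt k j hjk]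
        rcases Nat.eq_zero_or_pos (j : ℕ) with hj | hj
        · have hj0 : j = 0 := Fin.val_injective (by simpa using hj)
          subst hj0
          rw [sub_self]
          exact bigOh_zero N
        · have he : f 0 * ((Polynomial.X * P k j : Polynomial ℂ) : PowerSeries ℂ)
              - f j * ((Polynomial.X * P k 0 : Polynomial ℂ) : PowerSeries ℂ)
              = PowerSeries.X * (f 0 * ((P k j : Polynomial ℂ) : PowerSeries ℂ)
                - f j * ((P k 0 : Polynomial ℂ) : PowerSeries ℂ)) := by
            push_cast
            ring
          rw [he]
          exact bigOh_mul_left _ _ (hP2 k j hk hj hjk)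
      · rw [pge k j (by omega)]
        exact hP3 k j hk (by omega)
  have hG1 : ∀ k j : Fin L, (j : ℕ) < (k : ℕ) →
      bigOh (f 0 * ((Ptil P k j : Polynomial ℂ) : PowerSeries ℂ)
      - f j * ((Ptil P k 0 : Polynomial ℂ) : PowerSeries ℂ)) (N + 1) := by
    intro k j hjk
    have hk : 1 ≤ (k : ℕ) := by omega
    rw [pz k hk, plt k j hjk]
    rcases Nat.eq_zero_or_pos (j : ℕ) with hj | hj
    · have hj0 : j = 0 := Fin.val_injective (by simpa using hj)
      subst hj0
      rw [sub_self]
      exact bigOh_zero (N + 1)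
    · have he : f 0 * ((Polynomial.X * P k j : Polynomial ℂ) : PowerSeries ℂ)
          - f j * ((Polynomial.X * P k 0 : Polynomial ℂ) : PowerSeries ℂ)
          = PowerSeries.X * (f 0 * ((P k j : Polynomial ℂ) : PowerSeries ℂ)
            - f j * ((P k 0 : Polynomial ℂ) : PowerSeries ℂ)) := by
        push_cast
        ring
      rw [he]
      exact bigOh_X_mul (hP2 k j hk hj hjk)
  -- the key algebraic identity
  have key : ∀ i k : Fin L,
      f 0 * (((∑ j, Qtil Q i j * Ptil P k j : Polynomial ℂ) : Polynomial ℂ) : PowerSeries ℂ)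
      = ((Ptil P k 0 : Polynomial ℂ) : PowerSeries ℂ)
          * (∑ j, f j * ((Qtil Q i j : Polynomial ℂ) : PowerSeries ℂ))
        + ∑ j, ((Qtil Q i j : Polynomial ℂ) : PowerSeries ℂ)
            * (f 0 * ((Ptil P k j : Polynomial ℂ) : PowerSeries ℂ)
              - f j * ((Ptil P k 0 : Polynomial ℂ) : PowerSeries ℂ)) := by
    intro i k
    have hcoe : (((∑ j, Qtil Q i j * Ptil P k j : Polynomial ℂ) : Polynomial ℂ) : PowerSeries ℂ)
        = ∑ j, ((Qtil Q i j : Polynomial ℂ) : PowerSeries ℂ)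
            * ((Ptil P k j : Polynomial ℂ) : PowerSeries ℂ) := by
      simp only [← Polynomial.coeToPowerSeries.ringHom_apply, map_sum, map_mul]
    rw [hcoe, Finset.mul_sum, Finset.mul_sum, ← Finset.sum_add_distrib]
    exact Finset.sum_congr rfl fun j _ => by ring
  -- entries are O(w^N)
  have hEO : ∀ i k : Fin L,
      bigOh (((∑ j, Qtil Q i j * Ptil P k j : Polynomial ℂ) : PowerSeries ℂ)) N := by
    intro i k
    refine bigOh_of_unit_mul hf0 ?_
    rw [key i k]
    refine bigOh_add (bigOh_mul_left _ _ (hQo i)) (bigOh_sum _ _ fun j _ => ?_)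
    exact bigOh_mul_left _ _ (hG k j)
  -- entries are O(w^{N+1}) below the diagonal
  have hElt : ∀ i k : Fin L, (i : ℕ) < (k : ℕ) →
      bigOh (((∑ j, Qtil Q i j * Ptil P k j : Polynomial ℂ) : PowerSeries ℂ)) (N + 1) := by
    intro i k hik
    refine bigOh_of_unit_mul hf0 ?_
    rw [key i k]
    refine bigOh_add ?_ (bigOh_sum _ _ fun j _ => ?_)
    · rw [pz k (by omega)]
      have he : ((Polynomial.X * P k 0 : Polynomial ℂ) : PowerSeries ℂ)
          * (∑ j, f j * ((Qtil Q i j : Polynomial ℂ) : PowerSeries ℂ))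
          = PowerSeries.X * (((P k 0 : Polynomial ℂ) : PowerSeries ℂ)
            * (∑ j, f j * ((Qtil Q i j : Polynomial ℂ) : PowerSeries ℂ))) := by
        push_cast
        ring
      rw [he]
      exact bigOh_X_mul (bigOh_mul_left _ _ (hQo i))
    · by_cases hji : (j : ℕ) ≤ (i : ℕ)
      · exact bigOh_mul_left _ _ (hG1 k j (by omega))
      · rw [qgt i j (by omega)]
        have he : ((Polynomial.X * Q i j : Polynomial ℂ) : PowerSeries ℂ)
            * (f 0 * ((Ptil P k j : Polynomial ℂ) : PowerSeries ℂ)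
              - f j * ((Ptil P k 0 : Polynomial ℂ) : PowerSeries ℂ))
            = PowerSeries.X * (((Q i j : Polynomial ℂ) : PowerSeries ℂ)
              * (f 0 * ((Ptil P k j : Polynomial ℂ) : PowerSeries ℂ)
                - f j * ((Ptil P k 0 : Polynomial ℂ) : PowerSeries ℂ))) := by
          push_cast
          ring
        rw [he]
        exact bigOh_X_mul (bigOh_mul_left _ _ (hG k j))
  -- low coefficients vanish
  have hlow : ∀ i k : Fin L, ∀ r < N, (∑ j, Qtil Q i j * Ptil P k j).coeff r = 0 := by
    intro i k r hr
    have := hEO i k r hr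
    rwa [Polynomial.coeff_coe] at this
  -- degree bound
  have hdeg : ∀ i k : Fin L, (∑ j, Qtil Q i j * Ptil P k j).degree ≤ ((N : ℕ) : WithBot ℕ) := by
    intro i k
    refine (Polynomial.degree_sum_le _ _).trans (Finset.sup_le fun j _ => ?_)
    refine (Polynomial.degree_mul_le _ _).trans ?_
    refine (add_le_add (hQt1 i j) (hPt1 k j)).trans ?_
    rw [Nat.cast_withBot, Nat.cast_withBot, Nat.cast_withBot, ← WithBot.coe_add]
    exact_mod_cast le_of_eq hNn
  -- top coefficient vanishes off the diagonal
  have htop : ∀ i k : Fin L, i ≠ k → (∑ j, Qtil Q i j * Ptil P k j).coeff N = 0 := by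
    intro i k hik
    rcases lt_trichotomy (i : ℕ) (k : ℕ) with h | h | h
    · have := hElt i k h N (by omega)
      rwa [Polynomial.coeff_coe] at this
    · exact absurd (Fin.val_injective h) hik
    · rw [Polynomial.finset_sum_coeff]
      refine Finset.sum_eq_zero fun j _ => ?_
      refine Polynomial.coeff_eq_zero_of_degree_lt ?_
      by_cases hjk : (j : ℕ) ≤ (k : ℕ)
      · refine (Polynomial.degree_mul_le _ _).trans_lt ?_
        refine lt_of_le_of_lt (add_le_add (hQt0 i j (by omega)) (hPt1 k j)) ?_
        rw [Nat.cast_withBot, Nat.cast_withBot, Nat.cast_withBot, ← WithBot.coe_add]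
        exact_mod_cast (by omega : n - 1 + m < N)
      · refine (Polynomial.degree_mul_le _ _).trans_lt ?_
        refine lt_of_le_of_lt (add_le_add (hQt1 i j) (hPt0 k j (by omega))) ?_
        rw [Nat.cast_withBot, Nat.cast_withBot, Nat.cast_withBot, ← WithBot.coe_add]
        exact_mod_cast (by omega : n + (m - 1) < N)
  -- every entry is C c · X^N
  have hEeq : ∀ i k : Fin L, (∑ j, Qtil Q i j * Ptil P k j)
      = Polynomial.C ((∑ j, Qtil Q i j * Ptil P k j).coeff N) * Polynomial.X ^ N := by
    intro i k
    ext r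
    rw [Polynomial.coeff_C_mul, Polynomial.coeff_X_pow]
    rcases lt_trichotomy r N with h | h | h
    · rw [hlow i k r h, if_neg (by omega), mul_zero]
    · subst h
      rw [if_pos rfl, mul_one]
    · rw [Polynomial.coeff_eq_zero_of_degree_lt, if_neg (by omega), mul_zero]
      refine lt_of_le_of_lt (hdeg i k) ?_
      rw [Nat.cast_withBot, Nat.cast_withBot]
      exact_mod_cast h
  have hmat : (Matrix.of fun i j => Qtil Q i j) * (Matrix.of fun i j => Ptil P j i) =
      Matrix.diagonal fun i =>
        Polynomial.C ((∑ j, Qtil Q i j * Ptil P i j).coeff N) * Polynomial.X ^ N := by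
    apply Matrix.ext
    intro i k
    rw [Matrix.mul_apply, Matrix.diagonal_apply]
    simp only [Matrix.of_apply]
    by_cases h : i = k
    · subst h
      rw [if_pos rfl]
      exact hEeq i i
    · rw [if_neg h]
      have := hEeq i k
      rw [htop i k h] at this
      simpa using this
  refine ⟨⟨fun i => (∑ j, Qtil Q i j * Ptil P i j).coeff N, hmat⟩, ?_⟩
  intro hQm hPm
  have hdiag : ∀ i : Fin L, (∑ j, Qtil Q i j * Ptil P i j).coeff N = 1 := by
    intro i
    rw [Polynomial.finset_sum_coeff]
    rw [Finset.sum_eq_single_of_mem i (Finset.mem_univ i)]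
    · rw [← hNn]
      rw [coeff_mul_of_degree_le (hQt1 i i) (hPt1 i i)]
      rw [qle i i le_rfl, pge i i le_rfl]
      have h1 : (Q i i).coeff n = 1 := by
        have := (hQm i).1.coeff_natDegree
        rwa [(hQm i).2] at this
      have h2 : (P i i).coeff m = 1 := by
        have := (hPm i).1.coeff_natDegree
        rwa [(hPm i).2] at this
      rw [h1, h2, mul_one]
    · intro j _ hji
      rw [← hNn]
      rw [coeff_mul_of_degree_le (hQt1 i j) (hPt1 i j)]
      rcases lt_trichotomy (j : ℕ) (i : ℕ) with h | h | h
      · have : (Qtil Q i j).coeff n = 0 := by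
          refine Polynomial.coeff_eq_zero_of_degree_lt ?_
          refine lt_of_le_of_lt (hQt0 i j h) ?_
          rw [Nat.cast_withBot, Nat.cast_withBot]
          exact_mod_cast (by omega : n - 1 < n)
        rw [this, zero_mul]
      · exact absurd (Fin.val_injective h) hji
      · have : (Ptil P i j).coeff m = 0 := by
          refine Polynomial.coeff_eq_zero_of_degree_lt ?_
          refine lt_of_le_of_lt (hPt0 i j h) ?_
          rw [Nat.cast_withBot, Nat.cast_withBot]
          exact_mod_cast (by omega : m - 1 < m)
        rw [this, mul_zero]
  have hfun : (fun i : Fin L =>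
      Polynomial.C ((∑ j, Qtil Q i j * Ptil P i j).coeff N) * Polynomial.X ^ N)
      = fun _ : Fin L => Polynomial.X ^ N := by
    funext i
    rw [hdiag i, map_one, one_mul]
  rw [hmat, hfun]
end
end

section
/- Let Q_j^{(i)} be a solution of the Hermite–Padé approximation problem and P_i^{(j)} a solution of the simultaneous Padé approximation problem for the same f_0, …, f_{L−1}, so that M_Q(w)·M_P(w) = w^{nL}·D with D diagonal constant. Fix i with 0 ≤ i ≤ L−1 and suppose the ith diagonal entry D_{ii} is nonzero. Then deg Q_i^{(i)} = n exactly, deg P_i^{(i)} = n(L−1) exactly, and D_{ii} equals the product of the leading coefficients of Q_i^{(i)} and P_i^{(i)}. -/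
noncomputable section

/-- Exact degrees of the diagonal parts and the diagonal constants. -/
theorem diagonal_degrees (L n : ℕ) (hL : 2 ≤ L) [NeZero L] (hn : 0 < n)
    (f : Fin L → PowerSeries ℂ) (hf0 : PowerSeries.constantCoeff (f 0) ≠ 0)
    (Q P : Fin L → Fin L → Polynomial ℂ)
    (hQ : IsHPSol n f Q) (hP : IsSPSol n f P)
    (D : Fin L → ℂ)
    (hD : (Matrix.of fun i j => Qtil Q i j) * (Matrix.of fun i j => Ptil P j i) =
      Matrix.diagonal fun i => Polynomial.C (D i) * Polynomial.X ^ (n * L))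
    (i : Fin L) (hDi : D i ≠ 0) :
    (Q i i).natDegree = n ∧ (P i i).natDegree = n * (L - 1) ∧
      D i = (Q i i).leadingCoeff * (P i i).leadingCoeff := by
  have hm : n * L = n + n * (L - 1) := by
    have h1 : L - 1 + 1 = L := by omega
    calc n * L = n * (L - 1 + 1) := by rw [h1]
    _ = n + n * (L - 1) := by ring
  have hm1 : 1 ≤ n * (L - 1) := Nat.one_le_iff_ne_zero.mpr
    (Nat.mul_ne_zero (by omega) (by omega))
  -- degree bounds
  have hQd : ∀ j : Fin L, j ≠ i → (Q i j).natDegree ≤ n - 1 := by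
    intro j hj
    have := hQ.1 i j
    rw [if_neg (fun h => hj h.symm), Nat.add_zero] at this
    exact Polynomial.natDegree_le_iff_degree_le.mpr this
  have hQdi : (Q i i).natDegree ≤ n := by
    have := hQ.1 i i
    rw [if_pos rfl] at this
    have := Polynomial.natDegree_le_iff_degree_le.mpr this
    omega
  have hPd : ∀ j : Fin L, j ≠ i → (P i j).natDegree ≤ n * (L - 1) - 1 := by
    intro j hj
    have := hP.1 i j
    rw [if_neg hj, Nat.add_zero] at this
    exact Polynomial.natDegree_le_iff_degree_le.mpr this
  have hPdi : (P i i).natDegree ≤ n * (L - 1) := by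
    have := hP.1 i i
    rw [if_pos rfl] at this
    have := Polynomial.natDegree_le_iff_degree_le.mpr this
    omega
  -- extract (i,i) entry, coefficient of X^(nL)
  have hentry := congrArg (fun M => Polynomial.coeff (M i i) (n * L)) hD
  simp only [Matrix.mul_apply, Matrix.of_apply, Matrix.diagonal_apply_eq,
    Polynomial.finset_sum_coeff, Polynomial.coeff_C_mul, Polynomial.coeff_X_pow,
    if_pos rfl, if_true, mul_one] at hentry
  have hzero : ∀ c ∈ Finset.univ, c ≠ i →
      Polynomial.coeff (Qtil Q i c * Ptil P i c) (n * L) = 0 := by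
    intro c _ hc
    rcases lt_or_gt_of_ne (Fin.val_ne_of_ne hc) with h | h
    · rw [Qtil, if_pos h.le, Ptil, if_pos h]
      apply Polynomial.coeff_eq_zero_of_natDegree_lt
      have hmul := Polynomial.natDegree_mul_le (p := Q i c) (q := Polynomial.X * P i c)
      have h1 := hQd c hc
      have h2 := hPd c hc
      have h3 := Polynomial.natDegree_mul_le (p := (Polynomial.X : Polynomial ℂ)) (q := P i c)
      rw [Polynomial.natDegree_X] at h3
      omega
    · rw [Qtil, if_neg (by omega), Ptil, if_neg (by omega)]
      apply Polynomial.coeff_eq_zero_of_natDegree_lt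
      have hmul := Polynomial.natDegree_mul_le (p := Polynomial.X * Q i c) (q := P i c)
      have h1 := hQd c hc
      have h2 := hPd c hc
      have h3 := Polynomial.natDegree_mul_le (p := (Polynomial.X : Polynomial ℂ)) (q := Q i c)
      rw [Polynomial.natDegree_X] at h3
      omega
  rw [Finset.sum_eq_single_of_mem i (Finset.mem_univ i) hzero] at hentry
  rw [Qtil, if_pos le_rfl, Ptil, if_neg (lt_irrefl _), hm,
    Polynomial.coeff_mul_add_eq_of_natDegree_le hQdi hPdi] at hentry
  have hq : (Q i i).coeff n ≠ 0 := fun h => hDi (by rw [← hentry, h, zero_mul])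
  have hp : (P i i).coeff (n * (L - 1)) ≠ 0 := fun h => hDi (by rw [← hentry, h, mul_zero])
  have hqd : (Q i i).natDegree = n :=
    le_antisymm hQdi (Polynomial.le_natDegree_of_ne_zero hq)
  have hpd : (P i i).natDegree = n * (L - 1) :=
    le_antisymm hPdi (Polynomial.le_natDegree_of_ne_zero hp)
  refine ⟨hqd, hpd, ?_⟩
  rw [Polynomial.leadingCoeff, Polynomial.leadingCoeff, hqd, hpd, ← hentry]
end
end

section
/- Let P_i^{(j)} be a solution of the simultaneous Padé approximation problem for f_0, …, f_{L−1}, and fix j with 0 ≤ j ≤ L−1. Denote by P̃_i^{(j)} the ith entry of the column vector P̃^{(j)}. Then for all a ≠ b in {0, …, L−1}: if a < j and b < j, then f_a·P̃_b^{(j)} − f_b·P̃_a^{(j)} = O(w^{nL+1}); otherwise f_a·P̃_b^{(j)} − f_b·P̃_a^{(j)} = O(w^{nL}). -/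
noncomputable section

/-- Order of vanishing of `f_a P̃_b^{(j)} - f_b P̃_a^{(j)}`. -/
theorem Ptil_remark (L n : ℕ) (hL : 2 ≤ L) [NeZero L] (hn : 0 < n)
    (f : Fin L → PowerSeries ℂ) (hf0 : PowerSeries.constantCoeff (f 0) ≠ 0)
    (P : Fin L → Fin L → Polynomial ℂ) (hP : IsSPSol n f P) (j : Fin L) :
    ∀ a b : Fin L, a ≠ b →
      (((a : ℕ) < (j : ℕ) ∧ (b : ℕ) < (j : ℕ)) →
        bigOh (f a * ((Ptil P j b : Polynomial ℂ) : PowerSeries ℂ)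
          - f b * ((Ptil P j a : Polynomial ℂ) : PowerSeries ℂ)) (n * L + 1)) ∧
      (¬((a : ℕ) < (j : ℕ) ∧ (b : ℕ) < (j : ℕ)) →
        bigOh (f a * ((Ptil P j b : Polynomial ℂ) : PowerSeries ℂ)
          - f b * ((Ptil P j a : Polynomial ℂ) : PowerSeries ℂ)) (n * L)) := by
  classical
  intro a b hab
  obtain ⟨hdeg, h1, h2, h3⟩ := hP
  obtain ⟨u, hu⟩ : IsUnit (f 0) :=
    IsUnit.of_mul_eq_one _ (PowerSeries.mul_inv_cancel _ hf0)
  -- key divisibility for each i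
  have key : ∀ i : Fin L,
      (PowerSeries.X : PowerSeries ℂ) ^ (n * L + if (i : ℕ) < (j : ℕ) then 1 else 0) ∣
        f 0 * ((Ptil P j i : Polynomial ℂ) : PowerSeries ℂ)
          - f i * ((Ptil P j 0 : Polynomial ℂ) : PowerSeries ℂ) := by
    intro i
    have hz : ((0 : Fin L) : ℕ) = 0 := rfl
    rcases Nat.lt_or_ge (i : ℕ) (j : ℕ) with hij | hij
    · have hj0 : 0 < (j : ℕ) := lt_of_le_of_lt (Nat.zero_le _) hij
      simp only [Ptil, hz, if_pos hij, if_pos hj0]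
      rcases Nat.eq_zero_or_pos (i : ℕ) with hi0 | hi1
      · have hi : i = 0 := Fin.ext (by simpa using hi0)
        rw [hi, sub_self]
        exact dvd_zero _
      · have hd := (PowerSeries.X_pow_dvd_iff).mpr (h2 j i hj0 hi1 hij)
        have heq : f 0 * ((Polynomial.X * P j i : Polynomial ℂ) : PowerSeries ℂ)
            - f i * ((Polynomial.X * P j 0 : Polynomial ℂ) : PowerSeries ℂ)
            = PowerSeries.X * (f 0 * ((P j i : Polynomial ℂ) : PowerSeries ℂ)
              - f i * ((P j 0 : Polynomial ℂ) : PowerSeries ℂ)) := by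
          simp only [Polynomial.coe_mul, Polynomial.coe_X]
          ring
        rw [heq, pow_succ, mul_comm]
        exact mul_dvd_mul_left _ hd
    · have hnlt : ¬ (i : ℕ) < (j : ℕ) := not_lt.mpr hij
      simp only [Ptil, hz, if_neg hnlt, if_neg hnlt, add_zero]
      rcases Nat.eq_zero_or_pos (j : ℕ) with hj0 | hj1
      · have hj : j = 0 := Fin.ext (by simpa using hj0)
        rw [if_neg (by simp [hj0])]
        rcases Nat.eq_zero_or_pos (i : ℕ) with hi0 | hi1
        · have hi : i = 0 := Fin.ext (by simpa using hi0)
          rw [hi, hj, sub_self]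
          exact dvd_zero _
        · rw [hj]
          exact (PowerSeries.X_pow_dvd_iff).mpr (h1 i hi1)
      · rw [if_pos hj1]
        exact (PowerSeries.X_pow_dvd_iff).mpr (h3 j i hj1 hij)
  -- deduce divisibility of the combination
  have comb : ∀ M : ℕ,
      M ≤ n * L + (if (a : ℕ) < (j : ℕ) then 1 else 0) →
      M ≤ n * L + (if (b : ℕ) < (j : ℕ) then 1 else 0) →
      bigOh (f a * ((Ptil P j b : Polynomial ℂ) : PowerSeries ℂ)
        - f b * ((Ptil P j a : Polynomial ℂ) : PowerSeries ℂ)) M := by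
    intro M ha hb
    have da : (PowerSeries.X : PowerSeries ℂ) ^ M ∣
        f 0 * ((Ptil P j a : Polynomial ℂ) : PowerSeries ℂ)
          - f a * ((Ptil P j 0 : Polynomial ℂ) : PowerSeries ℂ) :=
      dvd_trans (pow_dvd_pow _ ha) (key a)
    have db : (PowerSeries.X : PowerSeries ℂ) ^ M ∣
        f 0 * ((Ptil P j b : Polynomial ℂ) : PowerSeries ℂ)
          - f b * ((Ptil P j 0 : Polynomial ℂ) : PowerSeries ℂ) :=
      dvd_trans (pow_dvd_pow _ hb) (key b)
    have hd0 : (PowerSeries.X : PowerSeries ℂ) ^ M ∣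
        f 0 * (f a * ((Ptil P j b : Polynomial ℂ) : PowerSeries ℂ)
          - f b * ((Ptil P j a : Polynomial ℂ) : PowerSeries ℂ)) := by
      have hid : f 0 * (f a * ((Ptil P j b : Polynomial ℂ) : PowerSeries ℂ)
          - f b * ((Ptil P j a : Polynomial ℂ) : PowerSeries ℂ))
          = f a * (f 0 * ((Ptil P j b : Polynomial ℂ) : PowerSeries ℂ)
              - f b * ((Ptil P j 0 : Polynomial ℂ) : PowerSeries ℂ))
            - f b * (f 0 * ((Ptil P j a : Polynomial ℂ) : PowerSeries ℂ)
              - f a * ((Ptil P j 0 : Polynomial ℂ) : PowerSeries ℂ)) := by ring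
      rw [hid]
      exact dvd_sub (db.mul_left _) (da.mul_left _)
    have : (PowerSeries.X : PowerSeries ℂ) ^ M ∣
        f a * ((Ptil P j b : Polynomial ℂ) : PowerSeries ℂ)
          - f b * ((Ptil P j a : Polynomial ℂ) : PowerSeries ℂ) := by
      have := hd0.mul_left ((u⁻¹ : (PowerSeries ℂ)ˣ) : PowerSeries ℂ)
      rwa [← mul_assoc, ← hu, Units.inv_mul, one_mul] at this
    exact (PowerSeries.X_pow_dvd_iff).mp this
  constructor
  · rintro ⟨haj, hbj⟩
    exact comb _ (by rw [if_pos haj]) (by rw [if_pos hbj])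
  · intro _
    exact comb _ (Nat.le_add_right _ _) (Nat.le_add_right _ _)
end
end

section
/- Let Φ ∈ M_L(ℂ[[w]]) be an L×L matrix of formal power series such that the constant-term matrix Φ(0) is invertible and lower triangular, and let f_i := Φ_{i,0} (0 ≤ i ≤ L−1) be the entries of the first column of Φ (so f_0(0) ≠ 0). Suppose the polynomials Q_j^{(i)} form a solution of the Hermite–Padé approximation problem for (f_0, …, f_{L−1}) satisfying det M_Q(w) = w^{nL}. Then there exists Φ̂ ∈ M_L(ℂ[[w]]) such that M_Q(w)·Φ(w) = Φ̂(w)·diag(w^{nL}, 1, …, 1), the constant-term matrix Φ̂(0) is lower triangular, and det Φ̂ = det Φ as formal power series (in particular Φ̂(0) is invertible). -/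
noncomputable section

/-- The power-series content of the Schlesinger transformation `Y ↦ RY`
shifting the exponents at `z = ∞` by `(n(L-1), -n, …, -n)`. -/
theorem schlesinger_powerseries (L n : ℕ) (hL : 2 ≤ L) [NeZero L] (hn : 0 < n)
    (Φ : Matrix (Fin L) (Fin L) (PowerSeries ℂ))
    (hinv : IsUnit (Matrix.det (Matrix.of fun i j => PowerSeries.constantCoeff (Φ i j))))
    (hlow : ∀ i j : Fin L, (i : ℕ) < (j : ℕ) → PowerSeries.constantCoeff (Φ i j) = 0)
    (Q : Fin L → Fin L → Polynomial ℂ)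
    (hQ : IsHPSol n (fun i => Φ i 0) Q)
    (hdet : (Matrix.of fun i j => Qtil Q i j).det = Polynomial.X ^ (n * L)) :
    ∃ Φh : Matrix (Fin L) (Fin L) (PowerSeries ℂ),
      (Matrix.of fun i j => ((Qtil Q i j : Polynomial ℂ) : PowerSeries ℂ)) * Φ =
        Φh * Matrix.diagonal (fun j : Fin L =>
          if j = 0 then (PowerSeries.X : PowerSeries ℂ) ^ (n * L) else 1) ∧
      (∀ i j : Fin L, (i : ℕ) < (j : ℕ) → PowerSeries.constantCoeff (Φh i j) = 0) ∧
      Φh.det = Φ.det := by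
  classical
  set M : Matrix (Fin L) (Fin L) (PowerSeries ℂ) :=
    Matrix.of fun i j => ((Qtil Q i j : Polynomial ℂ) : PowerSeries ℂ) with hM
  have hdvd : ∀ i : Fin L, (PowerSeries.X : PowerSeries ℂ) ^ (n * L) ∣ (M * Φ) i 0 := by
    intro i
    rw [PowerSeries.X_pow_dvd_iff]
    intro m hm
    have h := hQ.2 i m hm
    have heq : (M * Φ) i 0
        = ∑ j, (Φ j 0) * ((Qtil Q i j : Polynomial ℂ) : PowerSeries ℂ) := by
      simp [Matrix.mul_apply, hM, mul_comm]
    rw [heq]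
    exact h
  choose c hc using hdvd
  set Φh : Matrix (Fin L) (Fin L) (PowerSeries ℂ) :=
    Matrix.of fun i j => if j = 0 then c i else (M * Φ) i j with hΦh
  have h1 : M * Φ = Φh * Matrix.diagonal (fun j : Fin L =>
      if j = 0 then (PowerSeries.X : PowerSeries ℂ) ^ (n * L) else 1) := by
    rw [← Matrix.ext_iff]
    intro i j
    rw [Matrix.mul_diagonal]
    by_cases h : j = 0
    · subst h
      rw [hc i]
      simp [hΦh, mul_comm]
    · simp [hΦh, h]
  refine ⟨Φh, h1, ?_, ?_⟩
  · intro i j hij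
    have hj : j ≠ 0 := by
      intro h; subst h; simp at hij
    simp only [hΦh, Matrix.of_apply, if_neg hj, Matrix.mul_apply, map_sum]
    apply Finset.sum_eq_zero
    intro k _
    rw [map_mul]
    by_cases hk : (k : ℕ) ≤ (i : ℕ)
    · rw [hlow k j (lt_of_le_of_lt hk hij), mul_zero]
    · have hz : PowerSeries.constantCoeff
          ((Qtil Q i k : Polynomial ℂ) : PowerSeries ℂ) = 0 := by
        rw [← PowerSeries.coeff_zero_eq_constantCoeff_apply, Polynomial.coeff_coe,
          Qtil, if_neg hk]
        simp [Polynomial.mul_coeff_zero]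
      rw [hM, Matrix.of_apply, hz, zero_mul]
  · have hXpow : (PowerSeries.X : PowerSeries ℂ) ^ (n * L) ≠ 0 :=
      pow_ne_zero _ PowerSeries.X_ne_zero
    have hdetD : (Matrix.diagonal (fun j : Fin L =>
        if j = 0 then (PowerSeries.X : PowerSeries ℂ) ^ (n * L) else 1)).det
        = (PowerSeries.X : PowerSeries ℂ) ^ (n * L) := by
      rw [Matrix.det_diagonal]
      rw [Finset.prod_ite_eq' Finset.univ (0 : Fin L)
        (fun _ => (PowerSeries.X : PowerSeries ℂ) ^ (n * L))]
      simp
    have hdetM : M.det = (PowerSeries.X : PowerSeries ℂ) ^ (n * L) := by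
      have hmm : M = (Polynomial.coeToPowerSeries.ringHom (R := ℂ)).mapMatrix
          (Matrix.of fun i j => Qtil Q i j) := by
        ext i j
        simp [hM]
      rw [hmm, ← RingHom.map_det, hdet]
      simp
    have h2 := congrArg Matrix.det h1
    rw [Matrix.det_mul, Matrix.det_mul, hdetM, hdetD] at h2
    rw [mul_comm ((PowerSeries.X : PowerSeries ℂ) ^ (n * L))] at h2
    exact mul_right_cancel₀ hXpow h2.symm
end
end

section
/- Let L ≥ 1, N ≥ 0, let u_0, …, u_{N+1} ∈ ℂ be pairwise distinct, and let A_0, …, A_{N+1} ∈ ℂ^{L×L}. Set A(z) := Σ_{i=0}^{N+1} A_i/(z−u_i), a matrix of rational functions of z. Let R(z) be an L×L matrix of polynomials in z whose determinant is a nonzero constant (so that R(z)^{−1} is again a matrix of polynomials). Then the matrix Â(z) := R(z)A(z)R(z)^{−1} + (dR/dz)(z)·R(z)^{−1} of rational functions satisfies: Â(z) − Σ_{i=0}^{N+1} R(u_i)A_iR(u_i)^{−1}/(z−u_i) is a matrix of polynomials in z. In particular, Â(z) has at most simple poles, all located among u_0, …, u_{N+1}, and its residue at z = u_i equals R(u_i)A_iR(u_i)^{−1}.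 -/
set_option synthInstance.maxHeartbeats 400000

set_option maxHeartbeats 1600000

noncomputable section

/-- A Schlesinger transformation with polynomially invertible multiplier `R`
sends a Fuchsian coefficient matrix `A(z) = ∑ Aᵢ/(z-uᵢ)` to
`Â = R A R⁻¹ + R' R⁻¹`, which again has only simple poles at the `uᵢ`
with residues `R(uᵢ) Aᵢ R(uᵢ)⁻¹`. -/
theorem schlesinger_fuchsian (L : ℕ) (hL : 1 ≤ L) (N : ℕ)
    (u : Fin (N + 2) → ℂ) (hu : Function.Injective u)
    (A : Fin (N + 2) → Matrix (Fin L) (Fin L) ℂ)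
    (R : Matrix (Fin L) (Fin L) (Polynomial ℂ))
    (c : ℂ) (hc : c ≠ 0) (hdet : R.det = Polynomial.C c) :
    ∃ B : Matrix (Fin L) (Fin L) (Polynomial ℂ),
      (R.map (algebraMap (Polynomial ℂ) (RatFunc ℂ))) *
            (∑ i, (RatFunc.X - RatFunc.C (u i))⁻¹ • (A i).map (⇑RatFunc.C)) *
            (R.map (algebraMap (Polynomial ℂ) (RatFunc ℂ)))⁻¹ +
          (R.map fun p => algebraMap (Polynomial ℂ) (RatFunc ℂ) (Polynomial.derivative p)) *
            (R.map (algebraMap (Polynomial ℂ) (RatFunc ℂ)))⁻¹ -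
          ∑ i, (RatFunc.X - RatFunc.C (u i))⁻¹ •
              ((R.map (Polynomial.eval (u i)) * A i *
                (R.map (Polynomial.eval (u i)))⁻¹).map (⇑RatFunc.C)) =
        B.map (algebraMap (Polynomial ℂ) (RatFunc ℂ)) := by
  classical
  set φ := algebraMap (Polynomial ℂ) (RatFunc ℂ) with hφ
  have hdetu : IsUnit R.det := by
    rw [hdet]; exact Polynomial.isUnit_C.mpr hc.isUnit
  set S := R⁻¹ with hSdef
  have hRS : R * S = 1 := Matrix.mul_nonsing_inv R hdetu
  -- inverse over RatFunc
  have hinvφ : (R.map ⇑φ)⁻¹ = S.map ⇑φ := by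
    apply Matrix.inv_eq_right_inv
    rw [← Matrix.map_mul, hRS, Matrix.map_one _ (map_zero φ) (map_one φ)]
  -- inverse over ℂ via evaluation
  have hinvev : ∀ i, (R.map (Polynomial.eval (u i)))⁻¹ = S.map (Polynomial.eval (u i)) := by
    intro i
    apply Matrix.inv_eq_right_inv
    have : R.map ⇑(Polynomial.evalRingHom (u i)) * S.map ⇑(Polynomial.evalRingHom (u i)) = 1 := by
      rw [← Matrix.map_mul, hRS, Matrix.map_one _ (map_zero _) (map_one _)]
    simpa [Polynomial.coe_evalRingHom] using this
  -- residue matrices over ℂ and the polynomial differences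
  set E : Fin (N + 2) → Matrix (Fin L) (Fin L) ℂ :=
    fun i => R.map (Polynomial.eval (u i)) * A i * S.map (Polynomial.eval (u i)) with hE
  set D : Fin (N + 2) → Matrix (Fin L) (Fin L) (Polynomial ℂ) :=
    fun i => R * (A i).map Polynomial.C * S - (E i).map Polynomial.C with hD
  have hDmap : ∀ i, (D i).map ⇑(Polynomial.evalRingHom (u i)) = 0 := by
    intro i
    show (Polynomial.evalRingHom (u i)).mapMatrix (D i) = 0
    rw [hD]
    simp only [map_sub, map_mul, RingHom.mapMatrix_apply, Matrix.map_map]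
    have h1 : (A i).map (⇑(Polynomial.evalRingHom (u i)) ∘ ⇑Polynomial.C) = A i := by
      refine Matrix.ext fun j k => ?_
      simp [Polynomial.coe_evalRingHom]
    have h2 : (E i).map (⇑(Polynomial.evalRingHom (u i)) ∘ ⇑Polynomial.C) = E i := by
      refine Matrix.ext fun j k => ?_
      simp [Polynomial.coe_evalRingHom]
    rw [h1, h2, hE]
    simp [Polynomial.coe_evalRingHom]
  have hDroot : ∀ i j k, ((D i) j k).IsRoot (u i) := by
    intro i j k
    have h0 : ((D i).map ⇑(Polynomial.evalRingHom (u i))) j k = (0 : Matrix (Fin L) (Fin L) ℂ) j k := by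
      rw [hDmap i]
    simpa [Matrix.map_apply, Polynomial.coe_evalRingHom, Polynomial.IsRoot] using h0
  -- quotient matrices
  set Q : Fin (N + 2) → Matrix (Fin L) (Fin L) (Polynomial ℂ) :=
    fun i => Matrix.of fun j k => (D i) j k / (Polynomial.X - Polynomial.C (u i)) with hQ
  have hQmul : ∀ i, (Polynomial.X - Polynomial.C (u i)) • (Q i) = D i := by
    intro i
    refine Matrix.ext fun j k => ?_
    have hdvd : (Polynomial.X - Polynomial.C (u i)) ∣ (D i) j k :=
      Polynomial.dvd_iff_isRoot.mpr (hDroot i j k)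
    simpa [hQ, Matrix.smul_apply, smul_eq_mul] using
      EuclideanDomain.mul_div_cancel' (Polynomial.X_sub_C_ne_zero (u i)) hdvd
  refine ⟨(∑ i, Q i) + (R.map fun p => Polynomial.derivative p) * S, ?_⟩
  -- rewrite the derivative term
  have hder : (R.map fun p => φ (Polynomial.derivative p)) * (R.map ⇑φ)⁻¹ =
      ((R.map fun p => Polynomial.derivative p) * S).map ⇑φ := by
    rw [hinvφ, Matrix.map_mul, Matrix.map_map]
    rfl
  -- nonvanishing of X - C u in RatFunc
  have hne : ∀ i, (RatFunc.X - RatFunc.C (u i)) ≠ 0 := by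
    intro i
    have : φ (Polynomial.X - Polynomial.C (u i)) ≠ 0 :=
      RatFunc.algebraMap_ne_zero (Polynomial.X_sub_C_ne_zero (u i))
    simpa [hφ, map_sub, RatFunc.algebraMap_X, RatFunc.algebraMap_C] using this
  -- key per-index identity
  have hterm : ∀ i, (RatFunc.X - RatFunc.C (u i))⁻¹ •
        (R.map ⇑φ * (A i).map ⇑RatFunc.C * (R.map ⇑φ)⁻¹) -
      (RatFunc.X - RatFunc.C (u i))⁻¹ •
        ((R.map (Polynomial.eval (u i)) * A i *
          (R.map (Polynomial.eval (u i)))⁻¹).map ⇑RatFunc.C) =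
      (Q i).map ⇑φ := by
    intro i
    have hAC : (A i).map ⇑RatFunc.C = ((A i).map Polynomial.C).map ⇑φ := by
      rw [Matrix.map_map]; refine Matrix.ext fun j k => ?_; simp [hφ, Function.comp, RatFunc.algebraMap_C]
    have hEC : (R.map (Polynomial.eval (u i)) * A i *
          (R.map (Polynomial.eval (u i)))⁻¹).map ⇑RatFunc.C = ((E i).map Polynomial.C).map ⇑φ := by
      rw [hinvev i, Matrix.map_map]
      refine Matrix.ext fun j k => ?_; simp [hφ, hE, Function.comp, RatFunc.algebraMap_C]
    rw [hAC, hEC, hinvφ, ← smul_sub, ← Matrix.map_mul, ← Matrix.map_mul, ← Matrix.map_sub ⇑φ (map_sub φ)]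
    rw [show R * (A i).map ⇑Polynomial.C * S - (E i).map ⇑Polynomial.C = D i from rfl]
    rw [← hQmul i]
    have hsm : (((Polynomial.X - Polynomial.C (u i)) • Q i).map ⇑φ) =
        (RatFunc.X - RatFunc.C (u i)) • ((Q i).map ⇑φ) := by
      refine Matrix.ext fun j k => ?_
      simp [Matrix.map_apply, Matrix.smul_apply, smul_eq_mul, map_mul, map_sub,
        RatFunc.algebraMap_X, RatFunc.algebraMap_C, hφ]
    rw [hsm, smul_smul, inv_mul_cancel₀ (hne i), one_smul]
  -- assemble
  rw [hinvφ]
  rw [Finset.mul_sum, Finset.sum_mul]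
  simp only [Matrix.mul_smul, Matrix.smul_mul]
  rw [Matrix.map_add ⇑φ (map_add φ), show (∑ i, Q i).map ⇑φ = ∑ i, (Q i).map ⇑φ from by
    have h := map_sum φ.mapMatrix Q Finset.univ
    simp only [RingHom.mapMatrix_apply] at h
    exact h]
  rw [add_sub_right_comm, ← Finset.sum_sub_distrib]
  congr 1
  · refine Finset.sum_congr rfl fun i _ => ?_
    have := hterm i
    rw [hinvφ] at this
    exact this
  · rw [← hder, hinvφ]
end
end

section
/- Fix i with 0 ≤ i ≤ L−1. For 0 ≤ j ≤ L−1 define Q_j^{(i)}(w) as the determinant of the (nL+1)×(nL+1) matrix whose first row carries the monomials (1, w, …, w^{n−1+δ_{ij}}) in the jth block of columns and zeros elsewhere, and whose remaining nL rows form the matrix 𝒜^{(i)}. Then deg Q_j^{(i)} ≤ n−1+δ_{ij} for every j, and the remainder ρ_i := Q_0^{(i)}f_0 + ⋯ + Q_i^{(i)}f_i + wQ_{i+1}^{(i)}f_{i+1} + ⋯ + wQ_{L−1}^{(i)}f_{L−1} satisfies ρ_i = O(w^{nL}); that is, these determinant polynomials solve the Hermite–Padé approximation conditions. -/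
noncomputable section

/-- The coefficient sequence of a power series, extended by `0` to negative indices. -/
def aext (f : PowerSeries ℂ) : ℤ → ℂ :=
  fun j => if 0 ≤ j then PowerSeries.coeff j.toNat f else 0

/-- Entry `(r, c)` (0-indexed) of the `nL × (nL+1)` matrix
`𝒜^{(i)} = [A^0_0(nL,n), …, A^{i-1}_0(nL,n), A^i_0(nL,n+1), A^{i+1}_{-1}(nL,n), …, A^{L-1}_{-1}(nL,n)]`,
where `a k` is the (extended) coefficient sequence of `f_k`. -/
def calA (n i : ℕ) (a : ℕ → ℤ → ℂ) (r c : ℕ) : ℂ :=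
  if c < n * i then a (c / n) ((r : ℤ) - ((c % n : ℕ) : ℤ))
  else if c < n * i + n + 1 then a i ((r : ℤ) - (((c - n * i : ℕ)) : ℤ))
  else a ((c - (n * i + n + 1)) / n + i + 1)
      ((r : ℤ) - ((((c - (n * i + n + 1)) % n : ℕ)) : ℤ) - 1)

/-- The determinant-defined Hermite–Padé polynomial `Q_j^{(i)}(w)`:
the determinant of the `(nL+1) × (nL+1)` matrix whose first row carries the
monomials `1, w, …, w^{n-1+δᵢⱼ}` in the `j`th block of columns and zeros
elsewhere, and whose remaining `nL` rows form `𝒜^{(i)}`. -/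
def Qpoly (L n i j : ℕ) (a : ℕ → ℤ → ℂ) : Polynomial ℂ :=
  Matrix.det (Matrix.of fun r c : Fin (n * L + 1) =>
    if (r : ℕ) = 0 then
      (if n * j + (if i < j then 1 else 0) ≤ (c : ℕ) ∧
          (c : ℕ) < n * j + (if i < j then 1 else 0) + n + (if i = j then 1 else 0) then
        Polynomial.X ^ ((c : ℕ) - (n * j + (if i < j then 1 else 0)))
      else 0)
    else Polynomial.C (calA n i a ((r : ℕ) - 1) (c : ℕ)))

/-- The remainder `ρ_i = Q_0^{(i)}f_0 + ⋯ + Q_i^{(i)}f_i + wQ_{i+1}^{(i)}f_{i+1} + ⋯ + wQ_{L-1}^{(i)}f_{L-1}`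
for the determinant-defined Hermite–Padé polynomials. -/
def rhoRem (L n i : ℕ) (f : ℕ → PowerSeries ℂ) : PowerSeries ℂ :=
  ∑ j ∈ Finset.range L,
    (if j ≤ i then ((Qpoly L n i j (fun k => aext (f k)) : Polynomial ℂ) : PowerSeries ℂ)
     else PowerSeries.X * ((Qpoly L n i j (fun k => aext (f k)) : Polynomial ℂ) : PowerSeries ℂ)) * f j

namespace HPaux

lemma mul_succ_le {n a b : ℕ} (h : a < b) : n * a + n ≤ n * b := by
  calc n * a + n = n * (a + 1) := by ring
    _ ≤ n * b := Nat.mul_le_mul_left n h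

/-- The minor of `𝒜^{(i)}` obtained by deleting column `c`. -/
def Dmin (L n i : ℕ) (a : ℕ → ℤ → ℂ) (c : Fin (n * L + 1)) : ℂ :=
  Matrix.det (Matrix.of fun r c' : Fin (n * L) =>
    calA n i a (r : ℕ) ((c.succAbove c' : Fin (n * L + 1)) : ℕ))

lemma det_row_expand (L n i : ℕ) (a : ℕ → ℤ → ℂ) (g : Fin (n * L + 1) → ℂ) :
    Matrix.det (Matrix.of fun r c : Fin (n * L + 1) =>
      if (r : ℕ) = 0 then g c else calA n i a ((r : ℕ) - 1) (c : ℕ))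
    = ∑ c : Fin (n * L + 1), (-1) ^ (c : ℕ) * g c * Dmin L n i a c := by
  rw [Matrix.det_succ_row_zero]
  refine Finset.sum_congr rfl fun c _ => ?_
  have e1 : (Matrix.of fun r c : Fin (n * L + 1) =>
      if (r : ℕ) = 0 then g c else calA n i a ((r : ℕ) - 1) (c : ℕ)) 0 c = g c := by
    simp
  have e2 : ((Matrix.of fun r c : Fin (n * L + 1) =>
      if (r : ℕ) = 0 then g c else calA n i a ((r : ℕ) - 1) (c : ℕ)).submatrix
        Fin.succ c.succAbove) = Matrix.of (fun r c' : Fin (n * L) =>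
      calA n i a (r : ℕ) ((c.succAbove c' : Fin (n * L + 1)) : ℕ)) := by
    ext r c'
    simp [Matrix.submatrix_apply, Fin.val_succ]
  rw [e1, e2, Dmin]

lemma Qdet_expand (L n i : ℕ) (a : ℕ → ℤ → ℂ) (g : Fin (n * L + 1) → Polynomial ℂ) :
    Matrix.det (Matrix.of fun r c : Fin (n * L + 1) =>
      if (r : ℕ) = 0 then g c else Polynomial.C (calA n i a ((r : ℕ) - 1) (c : ℕ)))
    = ∑ c : Fin (n * L + 1), (-1) ^ (c : ℕ) * g c * Polynomial.C (Dmin L n i a c) := by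
  rw [Matrix.det_succ_row_zero]
  refine Finset.sum_congr rfl fun c _ => ?_
  have e1 : (Matrix.of fun r c : Fin (n * L + 1) =>
      if (r : ℕ) = 0 then g c else Polynomial.C (calA n i a ((r : ℕ) - 1) (c : ℕ))) 0 c = g c := by
    simp
  have e2 : ((Matrix.of fun r c : Fin (n * L + 1) =>
      if (r : ℕ) = 0 then g c else Polynomial.C (calA n i a ((r : ℕ) - 1) (c : ℕ))).submatrix
        Fin.succ c.succAbove) = Polynomial.C.mapMatrix (Matrix.of (fun r c' : Fin (n * L) =>
      calA n i a (r : ℕ) ((c.succAbove c' : Fin (n * L + 1)) : ℕ))) := by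
    ext r c'
    simp [Matrix.submatrix_apply, Fin.val_succ, RingHom.mapMatrix_apply]
  rw [e1, e2, ← RingHom.map_det, Dmin]

lemma Qpoly_eq (L n i j : ℕ) (a : ℕ → ℤ → ℂ) :
    Qpoly L n i j a
    = ∑ c : Fin (n * L + 1), (-1) ^ (c : ℕ) *
        (if n * j + (if i < j then 1 else 0) ≤ (c : ℕ) ∧
            (c : ℕ) < n * j + (if i < j then 1 else 0) + n + (if i = j then 1 else 0) then
          Polynomial.X ^ ((c : ℕ) - (n * j + (if i < j then 1 else 0)))
        else 0) * Polynomial.C (Dmin L n i a c) :=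
  Qdet_expand L n i a _

/-- The value contributed by block `j` at column `c` to the coefficient of `w^t`. -/
def Eval (n i t : ℕ) (a : ℕ → ℤ → ℂ) (j c : ℕ) : ℂ :=
  if n * j + (if i < j then 1 else 0) ≤ c ∧
      c < n * j + (if i < j then 1 else 0) + n + (if i = j then 1 else 0) then
    a j ((t : ℤ) - ((c - (n * j + (if i < j then 1 else 0)) : ℕ) : ℤ)
        - (if j ≤ i then 0 else 1))
  else 0

lemma block_sum (L n i : ℕ) (hn : 0 < n) (hi : i < L) (t : ℕ) (a : ℕ → ℤ → ℂ)
    (c : ℕ) (hc : c ≤ n * L) :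
    ∑ j ∈ Finset.range L, Eval n i t a j c = calA n i a t c := by
  have hq : n * (c / n) + c % n = c := Nat.div_add_mod c n
  have hqm : c % n < n := Nat.mod_lt _ hn
  rcases lt_or_ge c (n * i) with h1 | h1
  · -- region 1 : c < n*i
    have hqi : c / n < i := (Nat.div_lt_iff_lt_mul hn).2 (by rwa [Nat.mul_comm])
    have hzero : ∀ j ∈ Finset.range L, j ≠ c / n → Eval n i t a j c = 0 := by
      intro j hj hne
      rcases lt_trichotomy j i with hj' | heq | hj'
      · simp only [Eval, if_neg (show ¬ i < j by omega), if_neg (show ¬ i = j by omega)]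
        rw [if_neg]
        rintro ⟨hA, hB⟩
        rcases hne.lt_or_gt with h | h
        · have := mul_succ_le (n := n) h
          omega
        · have := mul_succ_le (n := n) h
          omega
      · have hp : n * j = n * i := by rw [heq]
        simp only [Eval, if_neg (show ¬ i < j by omega), if_pos (show i = j by omega)]
        rw [if_neg]
        rintro ⟨hA, hB⟩
        omega
      · simp only [Eval, if_pos hj', if_neg (show ¬ i = j by omega)]
        rw [if_neg]
        rintro ⟨hA, hB⟩
        have := mul_succ_le (n := n) hj'
        omega
    rw [Finset.sum_eq_single_of_mem (c / n) (Finset.mem_range.2 (by omega)) hzero]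
    simp only [Eval]
    rw [calA, if_pos h1]
    split_ifs <;> first | (congr 1; omega) | (exfalso; omega)
  · rcases lt_or_ge c (n * i + n + 1) with h2 | h2
    · -- region 2
      have hzero : ∀ j ∈ Finset.range L, j ≠ i → Eval n i t a j c = 0 := by
        intro j hj hne
        rcases hne.lt_or_gt with hj' | hj'
        · simp only [Eval, if_neg (show ¬ i < j by omega), if_neg (show ¬ i = j by omega)]
          rw [if_neg]
          rintro ⟨hA, hB⟩
          have := mul_succ_le (n := n) hj'
          omega
        · simp only [Eval, if_pos hj', if_neg (show ¬ i = j by omega)]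
          rw [if_neg]
          rintro ⟨hA, hB⟩
          have := mul_succ_le (n := n) hj'
          omega
      rw [Finset.sum_eq_single_of_mem i (Finset.mem_range.2 hi) hzero]
      simp only [Eval]
      rw [calA, if_neg (show ¬ c < n * i by omega), if_pos h2]
      split_ifs <;> first | (congr 1; omega) | (exfalso; omega)
    · -- region 3
      rw [calA, if_neg (show ¬ c < n * i by omega), if_neg (show ¬ c < n * i + n + 1 by omega)]
      obtain ⟨d, hd0⟩ : ∃ d, d = c - (n * i + n + 1) := ⟨_, rfl⟩
      rw [← hd0]
      obtain ⟨q, hq'⟩ : ∃ q, q = d / n := ⟨_, rfl⟩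
      obtain ⟨r, hr'⟩ : ∃ r, r = d % n := ⟨_, rfl⟩
      rw [← hq', ← hr']
      have hd : n * q + r = d := by rw [hq', hr']; exact Nat.div_add_mod d n
      have hr : r < n := by rw [hr']; exact Nat.mod_lt _ hn
      have hiL : i + 1 < L := by
        by_contra hcon
        have hLi : L = i + 1 := by omega
        have e : n * (i + 1) = n * i + n := by ring
        rw [hLi] at hc
        omega
      have hdpos : 0 < n * (L - i - 1) := Nat.mul_pos hn (by omega)
      have hsplit : n * L = n * i + n + n * (L - i - 1) := by
        have h : i + 1 + (L - i - 1) = L := by omega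
        calc n * L = n * (i + 1 + (L - i - 1)) := by rw [h]
          _ = n * i + n + n * (L - i - 1) := by ring
      have hdlt : d < n * (L - i - 1) := by omega
      have hj0lt : q < L - i - 1 := by
        rw [hq']; exact (Nat.div_lt_iff_lt_mul hn).2 (by rwa [Nat.mul_comm])
      have hzero : ∀ j ∈ Finset.range L, j ≠ q + i + 1 → Eval n i t a j c = 0 := by
        intro j hj hne
        rcases lt_trichotomy j i with hj' | heq | hj'
        · simp only [Eval, if_neg (show ¬ i < j by omega), if_neg (show ¬ i = j by omega)]
          rw [if_neg]
          rintro ⟨hA, hB⟩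
          have := mul_succ_le (n := n) hj'
          omega
        · have hp : n * j = n * i := by rw [heq]
          simp only [Eval, if_neg (show ¬ i < j by omega), if_pos (show i = j by omega)]
          rw [if_neg]
          rintro ⟨hA, hB⟩
          omega
        · simp only [Eval, if_pos hj', if_neg (show ¬ i = j by omega)]
          rw [if_neg]
          rintro ⟨hA, hB⟩
          obtain ⟨k, hk⟩ : ∃ k, j = i + 1 + k := ⟨j - i - 1, by omega⟩
          subst hk
          have e2 : n * (i + 1 + k) = n * i + n + n * k := by ring
          have hdk : q = k := by
            rw [hq']
            refine Nat.div_eq_of_lt_le ?_ ?_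
            · have e3 : k * n = n * k := Nat.mul_comm _ _
              omega
            · have e4 : (k + 1) * n = n * k + n := by ring
              omega
          exact hne (by omega)
      rw [Finset.sum_eq_single_of_mem (q + i + 1) (Finset.mem_range.2 (by omega)) hzero]
      have e1 : n * (q + i + 1) = n * q + n * i + n := by ring
      simp only [Eval]
      split_ifs <;> first | (congr 1; omega) | (exfalso; omega)

lemma coeff_Xpow_mul_aext (f : PowerSeries ℂ) (e t : ℕ) :
    PowerSeries.coeff t (PowerSeries.X ^ e * f) = aext f ((t : ℤ) - (e : ℤ)) := by
  rw [PowerSeries.coeff_X_pow_mul']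
  unfold aext
  rcases le_or_gt e t with h | h
  · rw [if_pos h, if_pos (by omega)]
    have he : ((t : ℤ) - (e : ℤ)).toNat = t - e := by omega
    rw [he]
  · rw [if_neg (by omega), if_neg (by omega)]

end HPaux

/-- The determinant polynomials solve the Hermite–Padé approximation conditions. -/
theorem detQ_solves_HP (L n : ℕ) (hL : 2 ≤ L) (hn : 0 < n)
    (f : ℕ → PowerSeries ℂ) (hf0 : PowerSeries.constantCoeff (f 0) ≠ 0)
    (i : ℕ) (hi : i < L) :
    (∀ j < L, (Qpoly L n i j (fun k => aext (f k))).degree ≤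
        ((n - 1 + if i = j then 1 else 0 : ℕ) : WithBot ℕ)) ∧
    (∀ t < n * L, PowerSeries.coeff t (rhoRem L n i f) = 0) := by
  classical
  set a : ℕ → ℤ → ℂ := fun k => aext (f k) with ha
  constructor
  · -- degree bound
    intro j hj
    rw [HPaux.Qpoly_eq]
    refine le_trans (Polynomial.degree_sum_le _ _) ?_
    refine Finset.sup_le fun c _ => ?_
    by_cases hc : n * j + (if i < j then 1 else 0) ≤ (c : ℕ) ∧
        (c : ℕ) < n * j + (if i < j then 1 else 0) + n + (if i = j then 1 else 0)
    · rw [if_pos hc]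
      set e : ℕ := (c : ℕ) - (n * j + (if i < j then 1 else 0)) with he
      have hrw : ((-1 : Polynomial ℂ)) ^ (c : ℕ) * Polynomial.X ^ e *
          Polynomial.C (HPaux.Dmin L n i a c)
          = Polynomial.C ((-1) ^ (c : ℕ) * HPaux.Dmin L n i a c) * Polynomial.X ^ e := by
        rw [map_mul, map_pow, map_neg, map_one]; ring
      rw [hrw]
      refine le_trans (Polynomial.degree_mul_le _ _) ?_
      have h1 : (Polynomial.C ((-1) ^ (c : ℕ) * HPaux.Dmin L n i a c)).degree ≤ 0 :=
        Polynomial.degree_C_le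
      have hem : e ≤ n - 1 + if i = j then 1 else 0 := by
        by_cases hij : i = j <;> by_cases hij' : i < j <;>
          simp only [hij, hij', if_pos, if_neg, if_true, if_false] at hc he ⊢ <;> omega
      have h2 : (Polynomial.X ^ e : Polynomial ℂ).degree ≤
          ((n - 1 + if i = j then 1 else 0 : ℕ) : WithBot ℕ) := by
        rw [Polynomial.degree_X_pow]
        exact_mod_cast hem
      calc (Polynomial.C ((-1) ^ (c : ℕ) * HPaux.Dmin L n i a c)).degree +
            (Polynomial.X ^ e : Polynomial ℂ).degree
          ≤ 0 + ((n - 1 + if i = j then 1 else 0 : ℕ) : WithBot ℕ) := add_le_add h1 h2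
        _ = ((n - 1 + if i = j then 1 else 0 : ℕ) : WithBot ℕ) := zero_add _
    · rw [if_neg hc]
      simp
  · -- coefficient vanishing
    intro t ht
    have key : ∑ c : Fin (n * L + 1),
        (-1) ^ (c : ℕ) * calA n i a t (c : ℕ) * HPaux.Dmin L n i a c = 0 := by
      rw [← HPaux.det_row_expand L n i a (fun c => calA n i a t (c : ℕ))]
      refine Matrix.det_zero_of_row_eq
        (show (0 : Fin (n * L + 1)) ≠ (⟨t + 1, by omega⟩ : Fin (n * L + 1)) from ?_) ?_
      · simp [Fin.ext_iff]
      · funext c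
        simp
    have hQps : ∀ j, ((Qpoly L n i j a : Polynomial ℂ) : PowerSeries ℂ)
        = ∑ c : Fin (n * L + 1), ((-1 : PowerSeries ℂ)) ^ (c : ℕ) *
            (if n * j + (if i < j then 1 else 0) ≤ (c : ℕ) ∧
                (c : ℕ) < n * j + (if i < j then 1 else 0) + n + (if i = j then 1 else 0) then
              PowerSeries.X ^ ((c : ℕ) - (n * j + (if i < j then 1 else 0)))
            else 0) * PowerSeries.C (HPaux.Dmin L n i a c) := by
      intro j
      rw [HPaux.Qpoly_eq, ← Polynomial.coeToPowerSeries.ringHom_apply, map_sum]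
      refine Finset.sum_congr rfl fun c _ => ?_
      split_ifs with h <;>
        simp [map_mul, map_pow, map_neg, map_one, map_zero,
          Polynomial.coeToPowerSeries.ringHom_apply, Polynomial.coe_C, Polynomial.coe_X] <;>
        ring
    have hj : ∀ j ∈ Finset.range L,
        PowerSeries.coeff t
          ((if j ≤ i then ((Qpoly L n i j a : Polynomial ℂ) : PowerSeries ℂ)
            else PowerSeries.X * ((Qpoly L n i j a : Polynomial ℂ) : PowerSeries ℂ)) * f j)
        = ∑ c : Fin (n * L + 1),
            (-1) ^ (c : ℕ) * HPaux.Dmin L n i a c * HPaux.Eval n i t a j (c : ℕ) := by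
      intro j _
      by_cases hji : j ≤ i
      · rw [if_pos hji, hQps j, Finset.sum_mul, map_sum]
        refine Finset.sum_congr rfl fun c _ => ?_
        by_cases hcnd : n * j + (if i < j then 1 else 0) ≤ (c : ℕ) ∧
            (c : ℕ) < n * j + (if i < j then 1 else 0) + n + (if i = j then 1 else 0)
        · rw [if_pos hcnd]
          have hrw : ((-1 : PowerSeries ℂ)) ^ (c : ℕ) *
              PowerSeries.X ^ ((c : ℕ) - (n * j + (if i < j then 1 else 0))) *
              PowerSeries.C (HPaux.Dmin L n i a c) * f j
              = PowerSeries.C ((-1) ^ (c : ℕ) * HPaux.Dmin L n i a c) *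
                (PowerSeries.X ^ ((c : ℕ) - (n * j + (if i < j then 1 else 0))) * f j) := by
            rw [map_mul, map_pow, map_neg, map_one]; ring
          rw [hrw, PowerSeries.coeff_C_mul, HPaux.coeff_Xpow_mul_aext]
          simp only [HPaux.Eval, if_pos hcnd, if_pos hji, sub_zero, ha]
          try ring
        · rw [if_neg hcnd]
          simp [HPaux.Eval, hcnd]
      · rw [if_neg hji, hQps j, Finset.mul_sum, Finset.sum_mul, map_sum]
        refine Finset.sum_congr rfl fun c _ => ?_
        by_cases hcnd : n * j + (if i < j then 1 else 0) ≤ (c : ℕ) ∧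
            (c : ℕ) < n * j + (if i < j then 1 else 0) + n + (if i = j then 1 else 0)
        · rw [if_pos hcnd]
          have hrw : PowerSeries.X * (((-1 : PowerSeries ℂ)) ^ (c : ℕ) *
              PowerSeries.X ^ ((c : ℕ) - (n * j + (if i < j then 1 else 0))) *
              PowerSeries.C (HPaux.Dmin L n i a c)) * f j
              = PowerSeries.C ((-1) ^ (c : ℕ) * HPaux.Dmin L n i a c) *
                (PowerSeries.X ^ (((c : ℕ) - (n * j + (if i < j then 1 else 0))) + 1) * f j) := by
            rw [map_mul, map_pow, map_neg, map_one]; ring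
          rw [hrw, PowerSeries.coeff_C_mul, HPaux.coeff_Xpow_mul_aext]
          have hcast : ((t : ℤ) - ((((c : ℕ) - (n * j + (if i < j then 1 else 0))) + 1 : ℕ) : ℤ))
              = (t : ℤ) - (((c : ℕ) - (n * j + (if i < j then 1 else 0)) : ℕ) : ℤ) - 1 := by
            push_cast; ring
          rw [hcast]
          simp only [HPaux.Eval, if_pos hcnd, if_neg hji, ha]
          try ring
        · rw [if_neg hcnd]
          simp [HPaux.Eval, hcnd]
    unfold rhoRem
    rw [map_sum, Finset.sum_congr rfl hj, Finset.sum_comm]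
    rw [← key]
    refine Finset.sum_congr rfl fun c _ => ?_
    rw [← Finset.mul_sum,
      HPaux.block_sum L n i hn hi t a (c : ℕ) (by omega)]
    ring
end
end

section
/- Fix i with 0 ≤ i ≤ L−1, let Q_j^{(i)} be the determinant-defined Hermite–Padé polynomials and ρ_i = O(w^{nL}) the corresponding remainder. Then the coefficient of w^{nL} in ρ_i equals (−1)^{nL}·det[A^0_0(nL+1,n), …, A^{i−1}_0(nL+1,n), A^i_0(nL+1,n+1), A^{i+1}_{−1}(nL+1,n), …, A^{L−1}_{−1}(nL+1,n)]. -/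
noncomputable section

def jof (n i c : ℕ) : ℕ :=
  if c < n * i then c / n
  else if c < n * i + n + 1 then i
  else (c - (n * i + n + 1)) / n + i + 1

def sB (n i j : ℕ) : ℕ := n * j + (if i < j then 1 else 0)

lemma divmod {n : ℕ} (hn : 0 < n) (c : ℕ) :
    ∃ q r, r < n ∧ c = n * q + r ∧ c / n = q ∧ c % n = r :=
  ⟨c / n, c % n, Nat.mod_lt _ hn, (Nat.div_add_mod c n).symm, rfl, rfl⟩

lemma jof_lt {L n i : ℕ} (hn : 0 < n) (hi : i < L) {c : ℕ} (hc : c ≤ n * L) :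
    jof n i c < L := by
  unfold jof
  split_ifs with h1 h2
  · obtain ⟨q, r, hr, hc2, hdiv, hmod⟩ := divmod hn c
    rw [hdiv]
    by_contra h
    push_neg at h
    have := Nat.mul_le_mul_left n (hi.le.trans h)
    omega
  · exact hi
  · obtain ⟨q, r, hr, hc2, hdiv, hmod⟩ := divmod hn (c - (n * i + n + 1))
    rw [hdiv]
    by_contra h
    push_neg at h
    have h4 : n * L ≤ n * (q + i + 1) := Nat.mul_le_mul_left n (by omega)
    have e : n * (q + i + 1) = n * q + n * i + n := by ring
    omega

lemma jof_inblock {n i : ℕ} (hn : 0 < n) (c : ℕ) :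
    sB n i (jof n i c) ≤ c ∧
      c < sB n i (jof n i c) + n + (if i = jof n i c then 1 else 0) := by
  by_cases h1 : c < n * i
  · obtain ⟨q, r, hr, hc2, hdiv, hmod⟩ := divmod hn c
    have hj : jof n i c = q := by rw [jof, if_pos h1, hdiv]
    have hqi : q < i := by
      by_contra h
      push_neg at h
      have := Nat.mul_le_mul_left n h
      omega
    rw [hj, sB, if_neg (by omega : ¬ i < q), if_neg (by omega : ¬ i = q)]
    omega
  · by_cases h2 : c < n * i + n + 1
    · have hj : jof n i c = i := by rw [jof, if_neg h1, if_pos h2]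
      rw [hj, sB, if_neg (lt_irrefl i), if_pos rfl]
      omega
    · obtain ⟨q, r, hr, hc2, hdiv, hmod⟩ := divmod hn (c - (n * i + n + 1))
      have hj : jof n i c = q + i + 1 := by rw [jof, if_neg h1, if_neg h2, hdiv]
      rw [hj, sB, if_pos (by omega : i < q + i + 1),
        if_neg (by omega : ¬ i = q + i + 1)]
      have e : n * (q + i + 1) = n * q + n * i + n := by ring
      omega

lemma jof_eq_of_inblock {n i j c : ℕ} (hn : 0 < n)
    (h1 : sB n i j ≤ c)
    (h2 : c < sB n i j + n + (if i = j then 1 else 0)) : j = jof n i c := by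
  rcases lt_trichotomy j i with hji | rfl | hji
  · rw [sB, if_neg (by omega : ¬ i < j)] at h1 h2
    rw [if_neg (by omega : ¬ i = j)] at h2
    have e1 : n * (j + 1) ≤ n * i := Nat.mul_le_mul_left n (by omega)
    have e2 : n * (j + 1) = n * j + n := by ring
    have hci : c < n * i := by omega
    rw [jof, if_pos hci, show c = n * j + (c - n * j) by omega,
      Nat.mul_add_div hn, Nat.div_eq_of_lt (by omega)]
    omega
  · rw [sB, if_neg (lt_irrefl j)] at h1 h2
    rw [if_pos rfl] at h2
    rw [jof, if_neg (by omega), if_pos (by omega)]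
  · rw [sB, if_pos hji] at h1 h2
    rw [if_neg (by omega : ¬ i = j)] at h2
    have e1 : n * (i + 1) ≤ n * j := Nat.mul_le_mul_left n (by omega)
    have e2 : n * (i + 1) = n * i + n := by ring
    rw [jof, if_neg (by omega), if_neg (by omega)]
    have e3 : n * (j - i - 1) + n * (i + 1) = n * j := by
      rw [← Nat.mul_add]
      congr 1
      omega
    rw [show c - (n * i + n + 1) = n * (j - i - 1) + (c - (n * j + 1)) by omega,
      Nat.mul_add_div hn, Nat.div_eq_of_lt (by omega)]
    omega

lemma calA_eq {n i : ℕ} (a : ℕ → ℤ → ℂ) (r c : ℕ) (hn : 0 < n) :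
    calA n i a r c = a (jof n i c) ((r : ℤ) - c + n * jof n i c) := by
  unfold calA jof
  split_ifs with h1 h2
  · obtain ⟨q, rr, hr, hc2, hdiv, hmod⟩ := divmod hn c
    rw [hdiv, hmod]
    congr 1
    have : (c : ℤ) = n * q + rr := by exact_mod_cast hc2
    push_cast
    omega
  · congr 1
    omega
  · obtain ⟨q, rr, hr, hc2, hdiv, hmod⟩ := divmod hn (c - (n * i + n + 1))
    rw [hdiv, hmod]
    congr 1
    have h3 : n * i + n + 1 ≤ c := by omega
    have : (c : ℤ) = n * q + rr + (n * i + n + 1) := by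
      have : c = n * q + rr + (n * i + n + 1) := by omega
      exact_mod_cast this
    have e2 : (n : ℤ) * ((q : ℤ) + (i : ℤ) + 1) = (n : ℤ) * q + (n : ℤ) * i + (n : ℤ) := by
      ring
    push_cast
    omega

lemma aext_natCast (f : PowerSeries ℂ) (N : ℕ) :
    aext f (N : ℤ) = PowerSeries.coeff N f := by simp [aext]

lemma coeff_C_mul_X_pow_mul (e : ℂ) {k m : ℕ} (hk : k ≤ m) (φ : PowerSeries ℂ) :
    PowerSeries.coeff m (PowerSeries.C e * (PowerSeries.X ^ k * φ)) =
      e * PowerSeries.coeff (m - k) φ := by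
  rw [PowerSeries.coeff_C_mul]
  congr 1
  conv_lhs => rw [show m = m - k + k from (Nat.sub_add_cancel hk).symm]
  rw [PowerSeries.coeff_X_pow_mul]

/-- The leading coefficient of the remainder `ρ_i`. -/
theorem rho_leading_coeff (L n : ℕ) (hL : 2 ≤ L) (hn : 0 < n)
    (f : ℕ → PowerSeries ℂ) (hf0 : PowerSeries.constantCoeff (f 0) ≠ 0)
    (i : ℕ) (hi : i < L) :
    PowerSeries.coeff (n * L) (rhoRem L n i f) =
      (-1 : ℂ) ^ (n * L) *
        Matrix.det (Matrix.of fun r c : Fin (n * L + 1) =>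
          calA n i (fun k => aext (f k)) (r : ℕ) (c : ℕ)) := by
  classical
  simp only [rhoRem]
  set a : ℕ → ℤ → ℂ := fun k => aext (f k) with ha
  set D : Fin (n * L + 1) → ℂ := fun c =>
    Matrix.det (Matrix.of fun p q : Fin (n * L) =>
      calA n i a (p : ℕ) ((c.succAbove q : Fin (n * L + 1)) : ℕ)) with hD
  -- Laplace expansion of Qpoly along the first row
  have hQ : ∀ j, Qpoly L n i j a =
      ∑ c : Fin (n * L + 1),
        Polynomial.C ((-1) ^ (c : ℕ) * D c) *
          (if sB n i j ≤ (c : ℕ) ∧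
              (c : ℕ) < sB n i j + n + (if i = j then 1 else 0) then
            Polynomial.X ^ ((c : ℕ) - sB n i j)
          else 0) := by
    intro j
    rw [Qpoly, Matrix.det_succ_row_zero]
    refine Finset.sum_congr rfl fun c _ => ?_
    have hminor : ((Matrix.of fun r c : Fin (n * L + 1) =>
        if (r : ℕ) = 0 then
          (if n * j + (if i < j then 1 else 0) ≤ (c : ℕ) ∧
              (c : ℕ) < n * j + (if i < j then 1 else 0) + n + (if i = j then 1 else 0) then
            Polynomial.X ^ ((c : ℕ) - (n * j + (if i < j then 1 else 0)))
          else 0)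
        else Polynomial.C (calA n i a ((r : ℕ) - 1) (c : ℕ))).submatrix
          Fin.succ c.succAbove).det = Polynomial.C (D c) := by
      rw [hD, RingHom.map_det]
      congr 1
    rw [hminor]
    have hentry : (Matrix.of fun r c : Fin (n * L + 1) =>
        if (r : ℕ) = 0 then
          (if n * j + (if i < j then 1 else 0) ≤ (c : ℕ) ∧
              (c : ℕ) < n * j + (if i < j then 1 else 0) + n + (if i = j then 1 else 0) then
            Polynomial.X ^ ((c : ℕ) - (n * j + (if i < j then 1 else 0)))
          else 0)
        else Polynomial.C (calA n i a ((r : ℕ) - 1) (c : ℕ))) 0 c =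
        (if sB n i j ≤ (c : ℕ) ∧
            (c : ℕ) < sB n i j + n + (if i = j then 1 else 0) then
          Polynomial.X ^ ((c : ℕ) - sB n i j)
        else 0) := by
      simp [sB]
      congr 1
    rw [hentry, map_mul, map_pow, map_neg, map_one]
    try ring
  -- cast to power series
  have hQcast : ∀ j, ((Qpoly L n i j a : Polynomial ℂ) : PowerSeries ℂ) =
      ∑ c : Fin (n * L + 1),
        PowerSeries.C ((-1) ^ (c : ℕ) * D c) *
          (if sB n i j ≤ (c : ℕ) ∧
              (c : ℕ) < sB n i j + n + (if i = j then 1 else 0) then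
            (PowerSeries.X : PowerSeries ℂ) ^ ((c : ℕ) - sB n i j)
          else 0) := by
    intro j
    rw [hQ j]
    have hcs : ∀ (g : Fin (n * L + 1) → Polynomial ℂ),
        ((∑ c : Fin (n * L + 1), g c : Polynomial ℂ) : PowerSeries ℂ) =
          ∑ c : Fin (n * L + 1), ((g c : Polynomial ℂ) : PowerSeries ℂ) := by
      intro g
      have h := map_sum (Polynomial.coeToPowerSeries.ringHom (R := ℂ)) g Finset.univ
      simp only [Polynomial.coeToPowerSeries.ringHom_apply] at h
      exact h
    rw [hcs]
    refine Finset.sum_congr rfl fun c _ => ?_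
    by_cases h : sB n i j ≤ (c : ℕ) ∧
        (c : ℕ) < sB n i j + n + (if i = j then 1 else 0)
    · rw [if_pos h, if_pos h]
      simp [Polynomial.coe_mul, Polynomial.coe_pow, Polynomial.coe_C, Polynomial.coe_X]
    · rw [if_neg h, if_neg h]
      simp
  -- coefficient of each summand
  have hterm : ∀ j,
      PowerSeries.coeff (n * L)
        ((if j ≤ i then ((Qpoly L n i j a : Polynomial ℂ) : PowerSeries ℂ)
          else PowerSeries.X * ((Qpoly L n i j a : Polynomial ℂ) : PowerSeries ℂ)) * f j) =
      ∑ c : Fin (n * L + 1),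
        (if sB n i j ≤ (c : ℕ) ∧
            (c : ℕ) < sB n i j + n + (if i = j then 1 else 0) then
          (-1) ^ (c : ℕ) * D c *
            a j (((n * L : ℕ) : ℤ) - ((c : ℕ) : ℤ) + (n : ℤ) * (j : ℤ))
        else 0) := by
    intro j
    by_cases hji : j ≤ i
    · have hsB : sB n i j = n * j := by rw [sB, if_neg (by omega : ¬ i < j)]; omega
      rw [if_pos hji, hQcast j, Finset.sum_mul, map_sum]
      refine Finset.sum_congr rfl fun c _ => ?_
      rw [hsB]
      have hcle : (c : ℕ) ≤ n * L := Fin.is_le c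
      by_cases hcond : n * j ≤ (c : ℕ) ∧
          (c : ℕ) < n * j + n + (if i = j then 1 else 0)
      rotate_left
      · rw [if_neg hcond, if_neg hcond]
        simp
      · rw [if_pos hcond, if_pos hcond]
        have h1 := hcond.1
        rw [mul_assoc, coeff_C_mul_X_pow_mul _ (by omega : (c : ℕ) - n * j ≤ n * L)]
        have hz : ((n * L : ℕ) : ℤ) - ((c : ℕ) : ℤ) + (n : ℤ) * (j : ℤ) =
            ((n * L - ((c : ℕ) - n * j) : ℕ) : ℤ) := by
          have e : (n : ℤ) * (j : ℤ) = ((n * j : ℕ) : ℤ) := by push_cast; ring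
          omega
        simp only [ha]
        rw [hz, aext_natCast]
    · have hsB : sB n i j = n * j + 1 := by rw [sB, if_pos (by omega)]
      rw [if_neg hji, hQcast j, Finset.mul_sum, Finset.sum_mul, map_sum]
      refine Finset.sum_congr rfl fun c _ => ?_
      rw [hsB]
      have hcle : (c : ℕ) ≤ n * L := Fin.is_le c
      by_cases hcond : n * j + 1 ≤ (c : ℕ) ∧
          (c : ℕ) < n * j + 1 + n + (if i = j then 1 else 0)
      rotate_left
      · rw [if_neg hcond, if_neg hcond]
        simp
      · rw [if_pos hcond, if_pos hcond]
        have h1 := hcond.1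
        have hre : PowerSeries.X *
            (PowerSeries.C ((-1) ^ (c : ℕ) * D c) *
              PowerSeries.X ^ ((c : ℕ) - (n * j + 1))) * f j =
            PowerSeries.C ((-1) ^ (c : ℕ) * D c) *
              (PowerSeries.X ^ (((c : ℕ) - (n * j + 1)) + 1) * f j) := by
          ring
        rw [hre, coeff_C_mul_X_pow_mul _ (by omega : ((c : ℕ) - (n * j + 1)) + 1 ≤ n * L)]
        have hz : ((n * L : ℕ) : ℤ) - ((c : ℕ) : ℤ) + (n : ℤ) * (j : ℤ) =
            ((n * L - (((c : ℕ) - (n * j + 1)) + 1) : ℕ) : ℤ) := by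
          have e : (n : ℤ) * (j : ℤ) = ((n * j : ℕ) : ℤ) := by push_cast; ring
          omega
        simp only [ha]
        rw [hz, aext_natCast]
  -- sum everything
  rw [map_sum]
  rw [Finset.sum_congr rfl fun j _ => hterm j]
  rw [Finset.sum_comm]
  have hsingle : ∀ c : Fin (n * L + 1),
      (∑ j ∈ Finset.range L,
        (if sB n i j ≤ (c : ℕ) ∧
            (c : ℕ) < sB n i j + n + (if i = j then 1 else 0) then
          (-1) ^ (c : ℕ) * D c *
            a j (((n * L : ℕ) : ℤ) - ((c : ℕ) : ℤ) + (n : ℤ) * (j : ℤ))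
        else 0)) =
      (-1) ^ (c : ℕ) * D c * calA n i a (n * L) (c : ℕ) := by
    intro c
    have hcle : (c : ℕ) ≤ n * L := Fin.is_le c
    rw [Finset.sum_eq_single_of_mem (jof n i (c : ℕ))
      (Finset.mem_range.2 (jof_lt hn hi hcle))
      (fun b _ hbne => if_neg (fun hcond => hbne (jof_eq_of_inblock hn hcond.1 hcond.2)))]
    rw [if_pos ⟨(jof_inblock hn (c : ℕ)).1, (jof_inblock hn (c : ℕ)).2⟩]
    rw [calA_eq a (n * L) (c : ℕ) hn]
  rw [Finset.sum_congr rfl fun c _ => hsingle c]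
  -- expand the big determinant along the last row
  have hdet : Matrix.det (Matrix.of fun r c : Fin (n * L + 1) =>
        calA n i a (r : ℕ) (c : ℕ)) =
      ∑ c : Fin (n * L + 1), (-1) ^ (n * L + (c : ℕ)) *
        calA n i a (n * L) (c : ℕ) * D c := by
    rw [Matrix.det_succ_row _ (Fin.last (n * L))]
    refine Finset.sum_congr rfl fun c _ => ?_
    have hmin : ((Matrix.of fun r c : Fin (n * L + 1) =>
        calA n i a (r : ℕ) (c : ℕ)).submatrix
          (Fin.last (n * L)).succAbove c.succAbove) =
        Matrix.of (fun p q : Fin (n * L) =>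
          calA n i a (p : ℕ) ((c.succAbove q : Fin (n * L + 1)) : ℕ)) := by
      ext p q
      simp [Matrix.submatrix_apply, Fin.succAbove_last, Fin.coe_castSucc]
    rw [hmin, hD]
    simp [Fin.val_last]
  rw [hdet, Finset.mul_sum]
  refine Finset.sum_congr rfl fun c _ => ?_
  have h1 : ((-1 : ℂ)) ^ (n * L) * (-1) ^ (n * L) = 1 := by
    rw [← pow_add]
    exact Even.neg_one_pow ⟨n * L, rfl⟩
  linear_combination (-(((-1 : ℂ)) ^ (c : ℕ) * calA n i a (n * L) (c : ℕ) * D c)) * h1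
end
end

section
/- Assume in addition that f_0 = 1 (so a^0_j = δ_{j,0}), and set m = n(L−1). Let Q_j^{(i)} be the determinant-defined Hermite–Padé polynomials and ρ_i the corresponding remainder. Then: (a) for every 0 ≤ i ≤ L−1, det[A^0_0(nL,n), …, A^i_0(nL,n), A^{i+1}_{−1}(nL,n), …, A^{L−1}_{−1}(nL,n)] = Δ^{(i+1)}; (b) the coefficient of w^{nL} in ρ_0 equals (−1)^{nL}·Δ^{(L)}; (c) for 1 ≤ i ≤ L−1, Q_i^{(i)}(0) = (−1)^{ni}·Δ^{(i)}. Consequently, if Δ^{(i+1)} ≠ 0 and one divides the ith family by the normalizing constant NQ^{(i)} := (−1)^{n(i+1)}Δ^{(i+1)} (which makes Q_i^{(i)} monic), then the w^{nL}-coefficient of the normalized remainder ρ_0 equals (−1)^{n(L−1)}·Δ^{(L)}/Δ^{(1)}, and the normalized constant term Q_i^{(i)}(0) equals (−1)^n·Δ^{(i)}/Δ^{(i+1)} for 1 ≤ i ≤ L−1. -/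
noncomputable section

/-- The block-Toeplitz determinant `Δ^{(i)}` of size `m = n(L-1)`:
`Δ^{(i)} = det[A^1_n(m,n), …, A^{i-1}_n(m,n), A^i_{n-1}(m,n), …, A^{L-1}_{n-1}(m,n)]`. -/
def Delta (L n : ℕ) (a : ℕ → ℤ → ℂ) (i : ℕ) : ℂ :=
  Matrix.det (Matrix.of fun r c : Fin (n * (L - 1)) =>
    a ((c : ℕ) / n + 1)
      ((if (c : ℕ) / n + 1 < i then (n : ℤ) else (n : ℤ) - 1) +
        ((r : ℕ) : ℤ) - (((c : ℕ) % n : ℕ) : ℤ)))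

lemma aext_one (j : ℤ) : aext 1 j = if j = 0 then 1 else 0 := by
  unfold aext
  rcases le_or_gt 0 j with h | h
  · rw [if_pos h, PowerSeries.coeff_one]
    by_cases h0 : j = 0
    · simp [h0]
    · rw [if_neg h0, if_neg (by omega)]
  · rw [if_neg (by omega), if_neg (by omega)]

lemma aext_nonneg (g : PowerSeries ℂ) (z : ℤ) (h : 0 ≤ z) :
    aext g z = PowerSeries.coeff z.toNat g := if_pos h

lemma det_block_tri {k m : ℕ} (M : Matrix (Fin (k + m)) (Fin (k + m)) ℂ)
    (h1 : ∀ r c : Fin (k + m), (c : ℕ) < k → M r c = if (r : ℕ) = (c : ℕ) then 1 else 0) :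
    M.det = Matrix.det (Matrix.of fun r c : Fin m => M (Fin.natAdd k r) (Fin.natAdd k c)) := by
  rw [← Matrix.det_submatrix_equiv_self finSumFinEquiv M]
  have hM : M.submatrix finSumFinEquiv finSumFinEquiv =
      Matrix.fromBlocks 1 (Matrix.of fun r c => M (Fin.castAdd m r) (Fin.natAdd k c)) 0
        (Matrix.of fun r c => M (Fin.natAdd k r) (Fin.natAdd k c)) := by
    ext r c
    cases r with
    | inl r =>
      cases c with
      | inl c =>
        simp only [Matrix.submatrix_apply, finSumFinEquiv_apply_left, Matrix.fromBlocks_apply₁₁,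
          Matrix.one_apply]
        rw [h1 _ _ (by simpa using c.isLt)]
        simp [Fin.ext_iff]
      | inr c => simp [Matrix.fromBlocks_apply₁₂]
    | inr r =>
      cases c with
      | inl c =>
        simp only [Matrix.submatrix_apply, finSumFinEquiv_apply_left, finSumFinEquiv_apply_right,
          Matrix.fromBlocks_apply₂₁, Matrix.zero_apply]
        rw [h1 _ _ (by simpa using c.isLt)]
        have : ¬ ((Fin.natAdd k r : ℕ) = (Fin.castAdd m c : ℕ)) := by
          simp only [Fin.coe_natAdd, Fin.coe_castAdd]
          omega
        rw [if_neg this]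
      | inr c => simp [Matrix.fromBlocks_apply₂₂]
  rw [hM, Matrix.det_fromBlocks_zero₂₁, Matrix.det_one, one_mul]

lemma coeff_aux (m ε k : ℕ) (e d : ℂ) (g : PowerSeries ℂ) :
    PowerSeries.coeff m ((PowerSeries.X : PowerSeries ℂ) ^ ε *
        ((Polynomial.C e * Polynomial.X ^ k * Polynomial.C d : Polynomial ℂ) : PowerSeries ℂ) * g) =
      e * d * (if ε + k ≤ m then PowerSeries.coeff (m - (ε + k)) g else 0) := by
  rw [Polynomial.coe_mul, Polynomial.coe_mul, Polynomial.coe_C, Polynomial.coe_C,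
    Polynomial.coe_pow, Polynomial.coe_X]
  have h : (PowerSeries.X : PowerSeries ℂ) ^ ε *
      (PowerSeries.C e * PowerSeries.X ^ k * PowerSeries.C d) * g =
      (e * d) • ((PowerSeries.X : PowerSeries ℂ) ^ (ε + k) * g) := by
    rw [PowerSeries.smul_eq_C_mul, pow_add, map_mul]
    ring
  rw [h, map_smul, PowerSeries.coeff_X_pow_mul', smul_eq_mul]

lemma myDivHelper (y u v : ℂ) (hy : y * y = 1) : u / (y * v) = y * u / v := by
  have hy0 : y ≠ 0 := fun h => by simp [h] at hy
  rcases eq_or_ne v 0 with rfl | hv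
  · simp
  · rw [div_eq_div_iff (mul_ne_zero hy0 hv) hv]
    linear_combination (-(u * v)) * hy

lemma partA (L n : ℕ) (hL : 2 ≤ L) (hn : 0 < n) (f : ℕ → PowerSeries ℂ) (hf0 : f 0 = 1)
    (i : ℕ) :
    Matrix.det (Matrix.of fun r c : Fin (n * L) =>
        aext (f ((c : ℕ) / n))
          (((r : ℕ) : ℤ) - (((c : ℕ) % n : ℕ) : ℤ) -
            (if (c : ℕ) / n ≤ i then 0 else 1))) =
      Delta L n (fun k => aext (f k)) (i + 1) := by
  have key : n * L = n + n * (L - 1) := by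
    conv_lhs => rw [show L = (L - 1) + 1 by omega]
    ring
  rw [← Matrix.det_submatrix_equiv_self (finCongr key.symm)]
  rw [det_block_tri]
  · unfold Delta
    congr 1
    ext r c
    simp only [Matrix.of_apply, Matrix.submatrix_apply, finCongr_apply, Fin.coe_cast,
      Fin.coe_natAdd]
    have hdiv : (n + (c : ℕ)) / n = (c : ℕ) / n + 1 := by
      rw [add_comm, Nat.add_div_right _ hn]
    have hmod : (n + (c : ℕ)) % n = (c : ℕ) % n := Nat.add_mod_left n c
    simp only [hdiv, hmod]
    congr 1
    push_cast
    split_ifs <;> omega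
  · intro r c hc
    simp only [Matrix.submatrix_apply, Matrix.of_apply, finCongr_apply, Fin.coe_cast]
    simp only [Nat.div_eq_of_lt hc, Nat.mod_eq_of_lt hc, hf0, aext_one, if_pos (Nat.zero_le i)]
    split_ifs <;> first | rfl | omega

lemma partC (L n : ℕ) (hL : 2 ≤ L) (hn : 0 < n) (f : ℕ → PowerSeries ℂ) (hf0 : f 0 = 1)
    (i : ℕ) (hi1 : 1 ≤ i) (hiL : i < L) :
    (Qpoly L n i i (fun k => aext (f k))).coeff 0 =
      (-1 : ℂ) ^ (n * i) * Delta L n (fun k => aext (f k)) i := by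
  have hni : n * i < n * L + 1 := by
    have := Nat.mul_lt_mul_of_le_of_lt (le_refl n) hiL hn
    omega
  rw [Polynomial.coeff_zero_eq_eval_zero]
  unfold Qpoly
  rw [← Polynomial.coe_evalRingHom, RingHom.map_det]
  rw [Matrix.det_succ_row_zero]
  rw [Finset.sum_eq_single (⟨n * i, hni⟩ : Fin (n * L + 1))]
  · -- main term
    have h00 : ((0 : Fin (n * L + 1)) : ℕ) = 0 := rfl
    simp only [RingHom.mapMatrix_apply, Matrix.map_apply, Matrix.of_apply, h00, if_pos rfl,
      lt_irrefl, if_false, eq_self_iff_true, if_true, add_zero, Nat.sub_self, pow_zero,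
      map_one, mul_one]
    rw [if_pos (by omega : n * i ≤ n * i ∧ n * i < n * i + n + 1)]
    simp only [Nat.sub_self, pow_zero, map_one, mul_one]
    have hM : (((Matrix.of fun r c : Fin (n * L + 1) =>
            if (r : ℕ) = 0 then
              if n * i ≤ (c : ℕ) ∧ (c : ℕ) < n * i + n + 1 then
                Polynomial.X ^ ((c : ℕ) - (n * i))
              else 0
            else Polynomial.C (calA n i (fun k => aext (f k)) ((r : ℕ) - 1) (c : ℕ))).map
            ⇑(Polynomial.evalRingHom 0))).submatrix
          Fin.succ (⟨n * i, hni⟩ : Fin (n * L + 1)).succAbove =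
        Matrix.of (fun r c : Fin (n * L) =>
          aext (f ((c : ℕ) / n))
            (((r : ℕ) : ℤ) - (((c : ℕ) % n : ℕ) : ℤ) -
              (if (c : ℕ) / n ≤ i - 1 then 0 else 1))) := by
      ext r c
      simp only [Matrix.submatrix_apply, Matrix.map_apply,
        Matrix.of_apply, Fin.val_succ, Nat.add_sub_cancel,
        if_neg (Nat.succ_ne_zero (r : ℕ)), Polynomial.coe_evalRingHom, Polynomial.eval_C]
      rcases lt_or_ge (c : ℕ) (n * i) with h1 | h1
      · have hσ : (((⟨n * i, hni⟩ : Fin (n * L + 1)).succAbove c) : ℕ) = (c : ℕ) := by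
          rw [Fin.succAbove_of_castSucc_lt _ _ (by simp [Fin.lt_def, h1]), Fin.coe_castSucc]
        rw [hσ]
        unfold calA
        rw [if_pos h1]
        have hq : (c : ℕ) / n < i := Nat.div_lt_of_lt_mul (by omega)
        rw [if_pos (by omega : (c : ℕ) / n ≤ i - 1)]
        congr 1
        ring
      · have hσ : (((⟨n * i, hni⟩ : Fin (n * L + 1)).succAbove c) : ℕ) = (c : ℕ) + 1 := by
          rw [Fin.succAbove_of_le_castSucc _ _ (by simp [Fin.le_def, h1])]
          rfl
        rw [hσ]
        unfold calA
        rw [if_neg (by omega)]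
        rcases lt_or_ge (c : ℕ) (n * i + n) with h2 | h2
        · rw [if_pos (by omega)]
          obtain ⟨d, hd⟩ : ∃ d, (c : ℕ) = n * i + d := ⟨(c : ℕ) - n * i, by omega⟩
          have hdn : d < n := by omega
          have hdiv : (c : ℕ) / n = i := by
            rw [hd, Nat.mul_add_div hn, Nat.div_eq_of_lt hdn, add_zero]
          have hmod : (c : ℕ) % n = d := by
            rw [hd, Nat.mul_add_mod, Nat.mod_eq_of_lt hdn]
          simp only [hdiv, hmod, if_neg (by omega : ¬ i ≤ i - 1)]
          congr 1
          push_cast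
          omega
        · rw [if_neg (by omega)]
          obtain ⟨d, hd⟩ : ∃ d, (c : ℕ) = n * i + n + d := ⟨(c : ℕ) - (n * i + n), by omega⟩
          have hd' : (c : ℕ) = n * (i + 1) + d := by rw [hd]; ring
          have he : (c : ℕ) + 1 - (n * i + n + 1) = d := by omega
          have hdiv : (c : ℕ) / n = i + 1 + d / n := by
            rw [hd', Nat.mul_add_div hn]
          have hmod : (c : ℕ) % n = d % n := by
            rw [hd', Nat.mul_add_mod]
          obtain ⟨q, hq⟩ : ∃ q, d / n = q := ⟨_, rfl⟩
          obtain ⟨s, hs⟩ : ∃ s, d % n = s := ⟨_, rfl⟩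
          simp only [he, hdiv, hmod, hq, hs]
          rw [if_neg (by omega : ¬ i + 1 + q ≤ i - 1),
            show q + i + 1 = i + 1 + q from by omega]
    rw [hM, partA L n hL hn f hf0 (i - 1), show i - 1 + 1 = i by omega]
  · intro b _ hb
    have hb' : (b : ℕ) ≠ n * i := fun h => hb (Fin.ext h)
    have h00 : ((0 : Fin (n * L + 1)) : ℕ) = 0 := rfl
    simp only [RingHom.mapMatrix_apply, Matrix.map_apply, Matrix.of_apply, h00, if_pos rfl,
      lt_irrefl, if_false, eq_self_iff_true, if_true, add_zero]
    rcases em (n * i ≤ (b : ℕ) ∧ (b : ℕ) < n * i + n + 1) with h | h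
    · rw [if_pos h, Polynomial.coe_evalRingHom, Polynomial.eval_pow, Polynomial.eval_X,
        zero_pow (by omega : (b : ℕ) - n * i ≠ 0)]
      ring
    · rw [if_neg h, map_zero]
      ring
  · intro h; exact absurd (Finset.mem_univ _) h

lemma partB (L n : ℕ) (hL : 2 ≤ L) (hn : 0 < n) (f : ℕ → PowerSeries ℂ) (hf0 : f 0 = 1) :
    PowerSeries.coeff (n * L) (rhoRem L n 0 f) =
      (-1 : ℂ) ^ (n * L) * Delta L n (fun k => aext (f k)) L := by
  have hnnL : n ≤ n * L := Nat.le_mul_of_pos_right n (by omega)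
  set A : ℕ → ℤ → ℂ := fun k => aext (f k) with hA
  set D : Fin (n * L + 1) → ℂ := fun c =>
    Matrix.det (Matrix.of fun r c' : Fin (n * L) =>
      calA n 0 A (r : ℕ) ((c.succAbove c' : Fin (n * L + 1)) : ℕ)) with hD
  -- Step 0: expansion of Qpoly along the first row
  have hQ : ∀ j : ℕ, Qpoly L n 0 j A = ∑ c : Fin (n * L + 1),
      (-1) ^ (c : ℕ) *
        (if n * j + (if 0 < j then 1 else 0) ≤ (c : ℕ) ∧
            (c : ℕ) < n * j + (if 0 < j then 1 else 0) + n + (if 0 = j then 1 else 0) then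
          Polynomial.X ^ ((c : ℕ) - (n * j + (if 0 < j then 1 else 0)))
        else 0) * Polynomial.C (D c) := by
    intro j
    unfold Qpoly
    rw [Matrix.det_succ_row_zero]
    apply Finset.sum_congr rfl
    intro c _
    have hsub : (Matrix.of fun r c : Fin (n * L + 1) =>
        if (r : ℕ) = 0 then
          (if n * j + (if 0 < j then 1 else 0) ≤ (c : ℕ) ∧
              (c : ℕ) < n * j + (if 0 < j then 1 else 0) + n + (if 0 = j then 1 else 0) then
            Polynomial.X ^ ((c : ℕ) - (n * j + (if 0 < j then 1 else 0)))
          else 0)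
        else Polynomial.C (calA n 0 A ((r : ℕ) - 1) (c : ℕ))).submatrix Fin.succ c.succAbove =
        (Matrix.of fun r c' : Fin (n * L) =>
          calA n 0 A (r : ℕ) ((c.succAbove c' : Fin (n * L + 1)) : ℕ)).map
          ⇑(Polynomial.C : ℂ →+* Polynomial ℂ) := by
      ext r c'
      simp only [Matrix.submatrix_apply, Matrix.of_apply, Matrix.map_apply, Fin.val_succ,
        Nat.add_sub_cancel, if_neg (Nat.succ_ne_zero (r : ℕ))]
    rw [hsub, ← RingHom.mapMatrix_apply, ← RingHom.map_det]
    rfl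
  -- Step 1: the coefficient of each term of the remainder
  have hterm : ∀ j, 0 < j ∨ j = 0 → j < L →
      PowerSeries.coeff (n * L)
        ((if j ≤ 0 then ((Qpoly L n 0 j A : Polynomial ℂ) : PowerSeries ℂ)
          else PowerSeries.X * ((Qpoly L n 0 j A : Polynomial ℂ) : PowerSeries ℂ)) * f j) =
      ∑ c : Fin (n * L + 1),
        (if n * j + (if 0 < j then 1 else 0) ≤ (c : ℕ) ∧
            (c : ℕ) < n * j + (if 0 < j then 1 else 0) + n + (if 0 = j then 1 else 0) then
          (-1 : ℂ) ^ (c : ℕ) * calA n 0 A (n * L) (c : ℕ) * D c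
        else 0) := by
    intro j _ hjL
    have hite : (if j ≤ 0 then ((Qpoly L n 0 j A : Polynomial ℂ) : PowerSeries ℂ)
          else PowerSeries.X * ((Qpoly L n 0 j A : Polynomial ℂ) : PowerSeries ℂ)) =
        (PowerSeries.X : PowerSeries ℂ) ^ (if 0 < j then 1 else 0) *
          ((Qpoly L n 0 j A : Polynomial ℂ) : PowerSeries ℂ) := by
      rcases Nat.eq_zero_or_pos j with rfl | hj
      · simp
      · rw [if_neg (by omega), if_pos hj, pow_one]
    rw [hite, hQ j, ← Polynomial.coeToPowerSeries.ringHom_apply, map_sum, Finset.mul_sum,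
      Finset.sum_mul, map_sum]
    apply Finset.sum_congr rfl
    intro c _
    simp only [Polynomial.coeToPowerSeries.ringHom_apply]
    by_cases hc : n * j + (if 0 < j then 1 else 0) ≤ (c : ℕ) ∧
        (c : ℕ) < n * j + (if 0 < j then 1 else 0) + n + (if 0 = j then 1 else 0)
    · rw [if_pos hc, if_pos hc]
      rw [show ((-1 : Polynomial ℂ)) ^ (c : ℕ) = Polynomial.C ((-1 : ℂ) ^ (c : ℕ)) by
        rw [show (-1 : Polynomial ℂ) = Polynomial.C (-1) by simp, ← map_pow]]
      rw [coeff_aux]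
      have hcond : (if 0 < j then 1 else 0) + ((c : ℕ) - (n * j + (if 0 < j then 1 else 0))) ≤ n * L := by
        rcases Nat.eq_zero_or_pos j with rfl | hj
        · simp only [lt_self_iff_false, if_false, eq_self_iff_true, if_true, Nat.mul_zero,
            Nat.add_zero, Nat.zero_add, Nat.sub_zero] at hc ⊢
          omega
        · rw [if_pos hj] at hc ⊢
          omega
      rw [if_pos hcond]
      have hval : calA n 0 A (n * L) (c : ℕ) =
          PowerSeries.coeff (n * L - ((if 0 < j then 1 else 0) +
            ((c : ℕ) - (n * j + (if 0 < j then 1 else 0))))) (f j) := by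
        rcases Nat.eq_zero_or_pos j with rfl | hj
        · simp only [lt_self_iff_false, if_false, eq_self_iff_true, if_true, Nat.mul_zero,
            Nat.add_zero, Nat.zero_add, Nat.sub_zero] at hc ⊢
          unfold calA
          rw [if_neg (by omega), if_pos (by omega)]
          simp only [hA]
          rw [aext_nonneg _ _ (by push_cast; omega)]
          exact congrArg (fun k => PowerSeries.coeff k (f 0)) (by omega)
        · rw [if_pos hj] at hc ⊢
          obtain ⟨d, hd⟩ : ∃ d, (c : ℕ) = n * j + 1 + d := ⟨(c : ℕ) - (n * j + 1), by omega⟩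
          have hdn : d < n := by
            rcases hc with ⟨h1, h2⟩
            rw [if_neg (by omega : ¬ 0 = j)] at h2
            omega
          have hnj : n * j = n * (j - 1) + n := by
            conv_lhs => rw [show j = (j - 1) + 1 by omega]
            ring
          have hsub1 : (c : ℕ) - (n * 0 + n + 1) = n * (j - 1) + d := by omega
          unfold calA
          rw [if_neg (by omega), if_neg (by omega)]
          rw [hsub1, Nat.mul_add_div hn, Nat.mul_add_mod, Nat.div_eq_of_lt hdn,
            Nat.mod_eq_of_lt hdn, add_zero, show j - 1 + 0 + 1 = j by omega]
          simp only [hA]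
          rw [aext_nonneg _ _ (by push_cast; omega)]
          exact congrArg (fun k => PowerSeries.coeff k (f j)) (by omega)
      rw [hval]
      ring
    · rw [if_neg hc, if_neg hc]
      simp
  -- Step 2: collapse the double sum to det N
  have hsingle : ∀ c : Fin (n * L + 1),
      (∑ j ∈ Finset.range L,
        (if n * j + (if 0 < j then 1 else 0) ≤ (c : ℕ) ∧
            (c : ℕ) < n * j + (if 0 < j then 1 else 0) + n + (if 0 = j then 1 else 0) then
          (-1 : ℂ) ^ (c : ℕ) * calA n 0 A (n * L) (c : ℕ) * D c
        else 0)) = (-1 : ℂ) ^ (c : ℕ) * calA n 0 A (n * L) (c : ℕ) * D c := by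
    intro c
    rcases le_or_gt (c : ℕ) n with hc | hc
    · rw [Finset.sum_eq_single_of_mem 0 (Finset.mem_range.2 (by omega))]
      · rw [if_pos (by simp; omega)]
      · intro j hj hj0
        have hj1 : 0 < j := Nat.pos_of_ne_zero hj0
        have hnj : n ≤ n * j := Nat.le_mul_of_pos_right n hj1
        rw [if_pos hj1, if_neg (by omega : ¬ 0 = j)]
        apply if_neg
        rintro ⟨h1, h2⟩
        omega
    · have h1 := Nat.div_add_mod ((c : ℕ) - 1) n
      have h2 : ((c : ℕ) - 1) % n < n := Nat.mod_lt _ hn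
      have hj1 : 0 < ((c : ℕ) - 1) / n := (Nat.one_le_div_iff hn).2 (by omega)
      have hjL : ((c : ℕ) - 1) / n < L := Nat.div_lt_of_lt_mul (by omega)
      rw [Finset.sum_eq_single_of_mem (((c : ℕ) - 1) / n) (Finset.mem_range.2 hjL)]
      · rw [if_pos hj1, if_neg (by omega : ¬ 0 = ((c : ℕ) - 1) / n)]
        rw [if_pos (by omega)]
      · intro j hj hj0
        rcases Nat.eq_zero_or_pos j with rfl | hjpos
        · simp only [lt_irrefl, if_false, Nat.mul_zero, Nat.zero_add, Nat.add_zero]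
          apply if_neg
          rintro ⟨ha, hb⟩
          simp at hb
          omega
        · rw [if_pos hjpos, if_neg (by omega : ¬ 0 = j)]
          apply if_neg
          rintro ⟨ha, hb⟩
          have : ((c : ℕ) - 1) / n = j := by
            apply Nat.div_eq_of_lt_le
            · rw [mul_comm]; omega
            · rw [add_mul, one_mul, mul_comm j n]; omega
          omega
  -- Step 3: det N equals the sum
  set N : Matrix (Fin (n * L + 1)) (Fin (n * L + 1)) ℂ := Matrix.of fun r c =>
    if (r : ℕ) = 0 then calA n 0 A (n * L) (c : ℕ) else calA n 0 A ((r : ℕ) - 1) (c : ℕ) with hN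
  have hdetN : N.det = ∑ c : Fin (n * L + 1),
      (-1 : ℂ) ^ (c : ℕ) * calA n 0 A (n * L) (c : ℕ) * D c := by
    rw [Matrix.det_succ_row_zero]
    apply Finset.sum_congr rfl
    intro c _
    have hsub : N.submatrix Fin.succ c.succAbove =
        Matrix.of fun r c' : Fin (n * L) =>
          calA n 0 A (r : ℕ) ((c.succAbove c' : Fin (n * L + 1)) : ℕ) := by
      ext r c'
      rw [hN]
      simp only [Matrix.submatrix_apply, Matrix.of_apply, Fin.val_succ, Nat.add_sub_cancel,
        if_neg (Nat.succ_ne_zero (r : ℕ))]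
    rw [hsub]
    rfl
  -- Step 4: relate det N to det M via the rotation permutation
  set M : Matrix (Fin (n * L + 1)) (Fin (n * L + 1)) ℂ := Matrix.of fun r c =>
    calA n 0 A (r : ℕ) (c : ℕ) with hM
  have hperm : N.submatrix (⇑(finRotate (n * L + 1))) id = M := by
    ext r c
    simp only [Matrix.submatrix_apply, id_eq, hN, hM, Matrix.of_apply, coe_finRotate]
    by_cases hr : r = Fin.last (n * L)
    · rw [if_pos hr, if_pos rfl, hr, Fin.val_last]
    · rw [if_neg hr, if_neg (Nat.succ_ne_zero _), Nat.add_sub_cancel]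
  have hdetM : M.det = (-1 : ℂ) ^ (n * L) * N.det := by
    rw [← hperm]
    have := Matrix.det_permute (finRotate (n * L + 1)) N
    rw [this, sign_finRotate]
    push_cast
    ring
  have hNM : N.det = (-1 : ℂ) ^ (n * L) * M.det := by
    rw [hdetM, ← mul_assoc, ← pow_add]
    rw [Even.neg_one_pow ⟨n * L, by ring⟩, one_mul]
  -- Step 5: det M = Delta L
  have hMDelta : M.det = Delta L n A L := by
    have key2 : n * L + 1 = (n + 1) + n * (L - 1) := by
      conv_lhs => rw [show L = (L - 1) + 1 by omega]
      ring
    rw [← Matrix.det_submatrix_equiv_self (finCongr key2.symm) M]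
    rw [det_block_tri]
    · unfold Delta
      congr 1
      ext r c
      simp only [Matrix.submatrix_apply, finCongr_apply, Fin.coe_cast, Fin.coe_natAdd, hM,
        Matrix.of_apply]
      unfold calA
      rw [if_neg (by omega), if_neg (by omega)]
      have he : n + 1 + (c : ℕ) - (n * 0 + n + 1) = (c : ℕ) := by omega
      simp only [he]
      have hcL : (c : ℕ) / n + 1 < L := by
        have h := Nat.div_lt_of_lt_mul (show (c : ℕ) < n * (L - 1) from c.isLt)
        omega
      rw [if_pos hcL, show (c : ℕ) / n + 0 + 1 = (c : ℕ) / n + 1 by omega]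
      congr 1
      push_cast
      omega
    · intro r c hcn
      simp only [Matrix.submatrix_apply, finCongr_apply, Fin.coe_cast, hM, Matrix.of_apply]
      unfold calA
      rw [if_neg (by omega), if_pos (by omega)]
      simp only [hA, Nat.mul_zero, Nat.sub_zero, hf0, aext_one]
      split_ifs <;> first | rfl | omega
  -- Put everything together
  unfold rhoRem
  rw [map_sum]
  rw [Finset.sum_congr rfl fun j hj => hterm j (by omega) (Finset.mem_range.1 hj)]
  rw [Finset.sum_comm]
  rw [Finset.sum_congr rfl fun c _ => hsingle c]
  rw [← hdetN, hNM, hMDelta]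

/-- Block-Toeplitz determinant formulae in the case `f₀ = 1`. -/
theorem blockToeplitz_formulae (L n : ℕ) (hL : 2 ≤ L) (hn : 0 < n)
    (f : ℕ → PowerSeries ℂ) (hf0 : f 0 = 1) :
    (∀ i < L,
      Matrix.det (Matrix.of fun r c : Fin (n * L) =>
        aext (f ((c : ℕ) / n))
          (((r : ℕ) : ℤ) - (((c : ℕ) % n : ℕ) : ℤ) -
            (if (c : ℕ) / n ≤ i then 0 else 1))) =
        Delta L n (fun k => aext (f k)) (i + 1)) ∧
    (PowerSeries.coeff (n * L) (rhoRem L n 0 f) =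
      (-1 : ℂ) ^ (n * L) * Delta L n (fun k => aext (f k)) L) ∧
    (∀ i, 1 ≤ i → i < L →
      (Qpoly L n i i (fun k => aext (f k))).coeff 0 =
        (-1 : ℂ) ^ (n * i) * Delta L n (fun k => aext (f k)) i) ∧
    (Delta L n (fun k => aext (f k)) 1 ≠ 0 →
      PowerSeries.coeff (n * L) (rhoRem L n 0 f) /
          ((-1 : ℂ) ^ n * Delta L n (fun k => aext (f k)) 1) =
        (-1 : ℂ) ^ (n * (L - 1)) * Delta L n (fun k => aext (f k)) L /
          Delta L n (fun k => aext (f k)) 1) ∧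
    (∀ i, 1 ≤ i → i < L → Delta L n (fun k => aext (f k)) (i + 1) ≠ 0 →
      (Qpoly L n i i (fun k => aext (f k))).coeff 0 /
          ((-1 : ℂ) ^ (n * (i + 1)) * Delta L n (fun k => aext (f k)) (i + 1)) =
        (-1 : ℂ) ^ n * Delta L n (fun k => aext (f k)) i /
          Delta L n (fun k => aext (f k)) (i + 1)) := by
  refine ⟨fun i _ => partA L n hL hn f hf0 i, partB L n hL hn f hf0,
    fun i h1 h2 => partC L n hL hn f hf0 i h1 h2, ?_, ?_⟩
  · intro _
    have key : n * L = n + n * (L - 1) := by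
      conv_lhs => rw [show L = (L - 1) + 1 by omega]
      ring
    rw [partB L n hL hn f hf0, key, pow_add, mul_assoc,
      mul_div_mul_left _ _ (pow_ne_zero n (by norm_num : (-1 : ℂ) ≠ 0))]
  · intro i h1 h2 _
    have hyy : (-1 : ℂ) ^ n * (-1 : ℂ) ^ n = 1 := by
      rw [← pow_add]
      exact Even.neg_one_pow ⟨n, rfl⟩
    rw [partC L n hL hn f hf0 i h1 h2,
      show (-1 : ℂ) ^ (n * (i + 1)) = (-1 : ℂ) ^ (n * i) * (-1 : ℂ) ^ n by
        rw [show n * (i + 1) = n * i + n by ring, pow_add],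
      mul_assoc, mul_div_mul_left _ _ (pow_ne_zero (n * i) (by norm_num : (-1 : ℂ) ≠ 0))]
    exact myDivHelper _ _ _ hyy
end
end
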